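/- arXiv:1601.05495 — 2 statements merged into one kernel-verified Lean document; each statement's English description precedes it below -/
import Mathlib

section
/- For any nonnegative weights λ_{j,a}, with probability at least 1 − 2e³ d^{−3} over the n independent PL rankings, the gradient of the rank-breaking log-likelihood at the true parameter satisfies ‖∇L_RB(θ*)‖₂ ≤ √(6 log d · Σ_{j=1}^n Σ_{a=1}^{ℓ_j} λ_{j,a}² (κ_j − p_{j,a})(κ_j − p_{j,a} + 1)). -/
open Real

noncomputable section

/- A ranking of a finite set `S`: a bijection from positions `Fin S.card`
(position `0` is the highest rank) to the elements of `S`. -/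
abbrev Ranking {ι : Type*} [DecidableEq ι] (S : Finset ι) := Fin S.card ≃ {x // x ∈ S}

/- The Plackett–Luce probability of observing the ranking `σ` of the set `S`,
under parameter `θ`. -/
noncomputable def PLProb {ι : Type*} [DecidableEq ι] (θ : ι → ℝ) (S : Finset ι)
    (σ : Ranking S) : ℝ :=
  ∏ a : Fin S.card,
    (Real.exp (θ (σ a).1) /
      ∑ a' ∈ Finset.univ.filter (fun a' => a ≤ a'), Real.exp (θ (σ a').1))

/- The (1-based) position at which item `i` is ranked by `σ`. -/
def rankOf {ι : Type*} [DecidableEq ι] {S : Finset ι} (σ : Ranking S)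
    (i : {x // x ∈ S}) : ℕ := (σ.symm i).val + 1

/- Probability of an event under the PL model for a single ranking of `S`. -/
open Classical in
noncomputable def PLprobEvent {ι : Type*} [DecidableEq ι] (θ : ι → ℝ) (S : Finset ι)
    (E : Ranking S → Prop) : ℝ :=
  ∑ σ : Ranking S, if E σ then PLProb θ S σ else 0

/- Probability of an event for `n` independent PL rankings of fixed offer sets. -/
open Classical in
noncomputable def jointProb {d n : ℕ} (θ : Fin d → ℝ) (S : Fin n → Finset (Fin d))
    (E : (∀ j, Ranking (S j)) → Prop) : ℝ :=
  ∑ σ : (∀ j, Ranking (S j)), if E σ then ∏ j, PLProb θ (S j) (σ j) else 0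

/- The parameter space `Ω_b`. -/
def OmegaB {d : ℕ} (b : ℝ) (θ : Fin d → ℝ) : Prop :=
  (∑ i, θ i) = 0 ∧ ∀ i, |θ i| ≤ b

/- Contribution to the rank-breaking log-likelihood from the separator at
(1-based) position `p` of the ranking `σ`. -/
open Classical in
noncomputable def rbTerm {d : ℕ} (θ : Fin d → ℝ) {S : Finset (Fin d)} (σ : Ranking S)
    (p : ℕ) : ℝ :=
  ∑ i ∈ S.attach, ∑ i' ∈ S.attach,
    if rankOf σ i' = p ∧ p < rankOf σ i then
      θ i'.1 - Real.log (Real.exp (θ i.1) + Real.exp (θ i'.1))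
    else 0

/- The rank-breaking log-likelihood. -/
noncomputable def LRB {d n : ℕ} (S : Fin n → Finset (Fin d)) (ℓ : Fin n → ℕ)
    (p : (j : Fin n) → Fin (ℓ j) → ℕ) (lam : (j : Fin n) → Fin (ℓ j) → ℝ)
    (σ : ∀ j, Ranking (S j)) (θ : Fin d → ℝ) : ℝ :=
  ∑ j, ∑ a, lam j a * rbTerm θ (σ j) (p j a)

/- The rank-one matrix `(e_i - e_{i'}) (e_i - e_{i'})ᵀ`. -/
noncomputable def pairMatrix {d : ℕ} (i i' : Fin d) : Matrix (Fin d) (Fin d) ℝ :=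
  Matrix.vecMulVec (Pi.single i 1 - Pi.single i' 1) (Pi.single i 1 - Pi.single i' 1)

/- Weighted comparison-graph Laplacian `Σ_j w_j Σ_{i<i' ∈ S_j} (e_i-e_{i'})(e_i-e_{i'})ᵀ`. -/
open Classical in
noncomputable def graphLaplacian {d n : ℕ} (S : Fin n → Finset (Fin d)) (w : Fin n → ℝ) :
    Matrix (Fin d) (Fin d) ℝ :=
  ∑ j, w j • ∑ i ∈ S j, ∑ i' ∈ S j, if i < i' then pairMatrix i i' else 0

/- The eigenvalues of a Hermitian matrix, sorted in increasing order. -/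
noncomputable def sortedEig {d : ℕ} {M : Matrix (Fin d) (Fin d) ℝ} (hM : M.IsHermitian) :
    Fin d → ℝ :=
  hM.eigenvalues ∘ Tuple.sort hM.eigenvalues

/- Euclidean norm of a vector in `ℝ^m`. -/
noncomputable def l2norm {m : ℕ} (v : Fin m → ℝ) : ℝ := Real.sqrt (∑ i, (v i) ^ 2)

end

/- The gradient of the rank-breaking log-likelihood at θ, coordinate i. -/
open Classical in
noncomputable def gradLRB {d n : ℕ} (S : Fin n → Finset (Fin d)) (ℓ : Fin n → ℕ)
    (p : (j : Fin n) → Fin (ℓ j) → ℕ) (lam : (j : Fin n) → Fin (ℓ j) → ℝ)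
    (θ : Fin d → ℝ) (σ : ∀ j, Ranking (S j)) (i : Fin d) : ℝ :=
  ∑ j, ∑ a, ∑ i0 ∈ (S j).attach, ∑ i0' ∈ (S j).attach,
    if i0.1 = i ∧ i0'.1 ≠ i ∧
        ((rankOf (σ j) i0' = p j a ∧ p j a < rankOf (σ j) i0) ∨
         (rankOf (σ j) i0 = p j a ∧ p j a < rankOf (σ j) i0')) then
      lam j a * ((if rankOf (σ j) i0 < rankOf (σ j) i0' then (1 : ℝ) else 0) -
        Real.exp (θ i0.1) / (Real.exp (θ i0.1) + Real.exp (θ i0'.1)))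
    else 0


lemma aux_sinh_le_mul_cosh {w : ℝ} (hw : 0 ≤ w) : Real.sinh w ≤ w * Real.cosh w := by
  have key : ∀ x : ℝ, HasDerivAt (fun y => y * Real.cosh y - Real.sinh y) (x * Real.sinh x) x := by
    intro x
    have h1 : HasDerivAt (fun y : ℝ => y * Real.cosh y) (1 * Real.cosh x + x * Real.sinh x) x :=
      (hasDerivAt_id x).mul (Real.hasDerivAt_cosh x)
    have h2 := h1.sub (Real.hasDerivAt_sinh x)
    rw [show x * Real.sinh x = 1 * Real.cosh x + x * Real.sinh x - Real.cosh x by ring]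
    exact h2
  have mono : MonotoneOn (fun y : ℝ => y * Real.cosh y - Real.sinh y) (Set.Ici 0) := by
    apply monotoneOn_of_deriv_nonneg (convex_Ici 0)
    · exact Continuous.continuousOn (by continuity)
    · intro x _
      exact (key x).differentiableAt.differentiableWithinAt
    · intro x hx
      rw [(key x).deriv]
      rw [interior_Ici] at hx
      exact mul_nonneg (le_of_lt hx) (Real.sinh_nonneg_iff.2 (le_of_lt hx))
  have h0 : (0:ℝ) * Real.cosh 0 - Real.sinh 0 = 0 := by simp
  have := mono (Set.self_mem_Ici) (Set.mem_Ici.2 hw) hw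
  simp only [h0] at this
  linarith [this]

lemma aux_convexOn_cosh_sqrt {t : ℝ} (ht : 0 ≤ t) :
    ConvexOn ℝ (Set.Ici 0) (fun z : ℝ => Real.cosh (t * Real.sqrt z)) := by
  have hD : Convex ℝ (Set.Ici (0:ℝ)) := convex_Ici 0
  refine convexOn_of_hasDerivWithinAt2_nonneg hD
    (f' := fun z => Real.sinh (t * Real.sqrt z) * (t * (1 / (2 * Real.sqrt z))))
    (f'' := fun z => (Real.cosh (t * Real.sqrt z) * (t * (1 / (2 * Real.sqrt z)))) *
        (t * (1 / (2 * Real.sqrt z))) +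
        Real.sinh (t * Real.sqrt z) *
          (t * (-(1 / (2 * Real.sqrt z)) / (2 * z))))
    ?_ ?_ ?_ ?_
  · exact (Real.continuous_cosh.comp (continuous_const.mul Real.continuous_sqrt)).continuousOn
  · intro z hz
    rw [interior_Ici] at hz
    have hs : HasDerivAt (fun z : ℝ => t * Real.sqrt z) (t * (1 / (2 * Real.sqrt z))) z :=
      (Real.hasDerivAt_sqrt (ne_of_gt hz)).const_mul t
    have : HasDerivAt (fun z : ℝ => Real.cosh (t * Real.sqrt z))
        (Real.sinh (t * Real.sqrt z) * (t * (1 / (2 * Real.sqrt z)))) z :=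
      by have h' := (Real.hasDerivAt_cosh (t * Real.sqrt z)).comp z hs; exact h'
    exact this.hasDerivWithinAt
  · intro z hz
    rw [interior_Ici] at hz
    have hz0 : z ≠ 0 := ne_of_gt hz
    have hsq : Real.sqrt z ≠ 0 := ne_of_gt (Real.sqrt_pos.2 hz)
    have hzz : Real.sqrt z * Real.sqrt z = z := Real.mul_self_sqrt (le_of_lt hz)
    have hs : HasDerivAt (fun z : ℝ => t * Real.sqrt z) (t * (1 / (2 * Real.sqrt z))) z :=
      (Real.hasDerivAt_sqrt hz0).const_mul t
    have h1 : HasDerivAt (fun z : ℝ => Real.sinh (t * Real.sqrt z))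
        (Real.cosh (t * Real.sqrt z) * (t * (1 / (2 * Real.sqrt z)))) z :=
      by have h' := (Real.hasDerivAt_sinh (t * Real.sqrt z)).comp z hs; exact h'
    have h2 : HasDerivAt (fun z : ℝ => t * (1 / (2 * Real.sqrt z)))
        (t * (-(1 / (2 * Real.sqrt z)) / (2 * z))) z := by
      have hinv : HasDerivAt (fun z : ℝ => (2 * Real.sqrt z)⁻¹)
          (-(1 / (2 * Real.sqrt z)) / (2 * z)) z := by
        have hden : HasDerivAt (fun z : ℝ => 2 * Real.sqrt z) (2 * (1 / (2 * Real.sqrt z))) z :=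
          (Real.hasDerivAt_sqrt hz0).const_mul 2
        have h := hden.inv (by positivity)
        have e : (-(1 / (2 * Real.sqrt z)) / (2 * z)) =
            -(2 * (1 / (2 * Real.sqrt z))) / (2 * Real.sqrt z) ^ 2 := by
          nth_rewrite 2 [← hzz]
          field_simp
        rw [e]
        exact h
      have h := hinv.const_mul t
      simpa only [one_div] using h
    have := h1.mul h2
    exact this.hasDerivWithinAt
  · intro z hz
    rw [interior_Ici] at hz
    have hs : (0:ℝ) < Real.sqrt z := Real.sqrt_pos.2 hz
    have hzz : Real.sqrt z * Real.sqrt z = z := Real.mul_self_sqrt (le_of_lt hz)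
    have hw : 0 ≤ t * Real.sqrt z := mul_nonneg ht (le_of_lt hs)
    have hkey := aux_sinh_le_mul_cosh hw
    have heq : (Real.cosh (t * Real.sqrt z) * (t * (1 / (2 * Real.sqrt z)))) *
        (t * (1 / (2 * Real.sqrt z))) +
        Real.sinh (t * Real.sqrt z) *
          (t * (-(1 / (2 * Real.sqrt z)) / (2 * z))) =
        (t / (4 * z * Real.sqrt z)) *
          ((t * Real.sqrt z) * Real.cosh (t * Real.sqrt z) - Real.sinh (t * Real.sqrt z)) := by
      rw [show (2:ℝ) * z = 2 * (Real.sqrt z * Real.sqrt z) from by rw [hzz],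
        show 4 * z * Real.sqrt z = 4 * (Real.sqrt z * Real.sqrt z) * Real.sqrt z from by rw [hzz]]
      have hs0 : Real.sqrt z ≠ 0 := hs.ne'
      field_simp
      ring
    rw [heq]
    have hz' : (0:ℝ) < z := hz
    apply mul_nonneg
    · apply div_nonneg ht
      positivity
    · linarith

lemma aux_chord {t r c u : ℝ} (ht : 0 ≤ t) (hr : 0 < r) (hc : 0 < c) (hu : |u| ≤ 2*r*c) :
    Real.cosh (t * Real.sqrt (r^2 + c^2 + u)) ≤
      Real.cosh (t*r) * Real.cosh (t*c) +
        u * (Real.sinh (t*r) * Real.sinh (t*c) / (2*r*c)) := by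
  have habs := abs_le.1 hu
  have hrc : (0:ℝ) < 4*r*c := by positivity
  set a : ℝ := (2*r*c - u)/(4*r*c) with ha_def
  set b : ℝ := (2*r*c + u)/(4*r*c) with hb_def
  have ha : 0 ≤ a := by apply div_nonneg <;> linarith
  have hb : 0 ≤ b := by apply div_nonneg <;> linarith
  have hab : a + b = 1 := by rw [ha_def, hb_def]; field_simp; ring
  have hcomb : a * (r-c)^2 + b * (r+c)^2 = r^2 + c^2 + u := by
    rw [ha_def, hb_def]; field_simp; ring
  have hconv := (aux_convexOn_cosh_sqrt ht).2 (Set.mem_Ici.2 (sq_nonneg (r-c)))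
      (Set.mem_Ici.2 (sq_nonneg (r+c))) ha hb hab
  simp only [smul_eq_mul] at hconv
  rw [hcomb] at hconv
  have e1 : Real.sqrt ((r-c)^2) = |r - c| := Real.sqrt_sq_eq_abs _
  have e2 : Real.sqrt ((r+c)^2) = r + c := Real.sqrt_sq (by linarith)
  rw [e1, e2] at hconv
  have e3 : Real.cosh (t * |r - c|) = Real.cosh (t * (r - c)) := by
    rw [← Real.cosh_abs (t * (r-c)), abs_mul, abs_of_nonneg ht]
  rw [e3] at hconv
  refine le_trans hconv ?_
  have expand : a * Real.cosh (t * (r - c)) + b * Real.cosh (t * (r + c)) =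
      Real.cosh (t*r) * Real.cosh (t*c) +
        u * (Real.sinh (t*r) * Real.sinh (t*c) / (2*r*c)) := by
    rw [mul_sub, mul_add, Real.cosh_sub, Real.cosh_add, ha_def, hb_def]
    field_simp
    ring
  rw [expand]

lemma aux_pinelis {ι : Type*} {d : ℕ} (A : Finset ι) (q : ι → ℝ) (v : ι → Fin d → ℝ)
    (x : Fin d → ℝ) (c t : ℝ)
    (hq0 : ∀ s ∈ A, 0 ≤ q s) (hq1 : ∑ s ∈ A, q s = 1)
    (hmean : ∀ i, (∑ s ∈ A, q s * v s i) = 0)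
    (hc : 0 ≤ c) (ht : 0 ≤ t)
    (hvc : ∀ s ∈ A, Real.sqrt (∑ i, (v s i)^2) ≤ c) :
    ∑ s ∈ A, q s * Real.cosh (t * Real.sqrt (∑ i, (x i + v s i)^2)) ≤
      Real.cosh (t * Real.sqrt (∑ i, (x i)^2)) * Real.exp (t^2 * c^2 / 2) := by
  classical
  set R2 := ∑ i, (x i)^2 with hR2_def
  have hR2 : 0 ≤ R2 := Finset.sum_nonneg (fun i _ => sq_nonneg _)
  set r := Real.sqrt R2 with hr_def
  have hr0 : 0 ≤ r := Real.sqrt_nonneg _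
  have hr2 : r^2 = R2 := Real.sq_sqrt hR2
  set ip : ι → ℝ := fun s => ∑ i, x i * v s i with hip_def
  set N2 : ι → ℝ := fun s => ∑ i, (v s i)^2 with hN2_def
  have hN2 : ∀ s, 0 ≤ N2 s := fun s => Finset.sum_nonneg (fun i _ => sq_nonneg _)
  have hexp : ∀ s, (∑ i, (x i + v s i)^2) = R2 + (2 * ip s + N2 s) := by
    intro s
    simp only [add_sq]
    rw [Finset.sum_add_distrib, Finset.sum_add_distrib]
    have h2 : ∑ i, 2 * x i * v s i = 2 * ip s := by
      rw [hip_def, Finset.mul_sum]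
      exact Finset.sum_congr rfl (fun i _ => by ring)
    rw [h2]
    simp only [hR2_def, hN2_def]
    ring
  set CC := Real.cosh (t*r) * Real.cosh (t*c) with hCC_def
  set K := Real.sinh (t*r) * Real.sinh (t*c) / (2*r*c) with hK_def
  have hCS : ∀ s ∈ A, (ip s)^2 ≤ R2 * N2 s := by
    intro s _
    exact Finset.sum_mul_sq_le_sq_mul_sq Finset.univ x (v s)
  have hN2c : ∀ s ∈ A, N2 s ≤ c^2 := by
    intro s hs
    have h := hvc s hs
    nlinarith [Real.sq_sqrt (hN2 s), Real.sqrt_nonneg (N2 s)]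
  have key : ∀ s ∈ A, Real.cosh (t * Real.sqrt (R2 + (2 * ip s + N2 s))) ≤
      CC + (2 * ip s) * K := by
    intro s hs
    have hip2 : (ip s)^2 ≤ (r*c)^2 := by
      have := hCS s hs
      have := hN2c s hs
      nlinarith [hN2 s, hR2]
    have hipabs : |ip s| ≤ r * c := by
      have h := Real.sqrt_le_sqrt hip2
      rwa [Real.sqrt_sq_eq_abs, Real.sqrt_sq (by positivity)] at h
    rcases eq_or_lt_of_le hc with hc0 | hcpos
    · -- c = 0
      have hN20 : N2 s = 0 := le_antisymm (by nlinarith [hN2c s hs]) (hN2 s)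
      have hip0 : ip s = 0 := by
        have : (ip s)^2 ≤ 0 := by nlinarith [hCS s hs]
        nlinarith [sq_nonneg (ip s)]
      obtain rfl : c = 0 := hc0.symm
      rw [hip0, hN20, hCC_def]
      simp [hr_def]
    rcases eq_or_lt_of_le hr0 with hr0' | hrpos
    · -- r = 0
      have hR20 : R2 = 0 := by
        have h := Real.sq_sqrt hR2
        rw [← hr_def, ← hr0'] at h
        simpa using h.symm
      have hip0 : ip s = 0 := by
        have h1 := hCS s hs
        rw [hR20] at h1
        nlinarith [sq_nonneg (ip s)]
      have hgoal : Real.cosh (t * Real.sqrt (R2 + (2 * ip s + N2 s))) ≤ Real.cosh (t * c) := by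
        apply Real.cosh_le_cosh.2
        rw [abs_of_nonneg (by positivity : (0:ℝ) ≤ t * Real.sqrt (R2 + (2 * ip s + N2 s))),
            abs_of_nonneg (mul_nonneg ht hc)]
        apply mul_le_mul_of_nonneg_left _ ht
        have he : R2 + (2 * ip s + N2 s) = N2 s := by rw [hR20, hip0]; ring
        rw [he]
        exact hvc s hs
      refine le_trans hgoal ?_
      have heq2 : CC + 2 * ip s * K = Real.cosh (t*c) := by
        rw [hip0, hCC_def, ← hr0']
        simp
      rw [heq2]
    · -- r, c > 0
      have hmono : Real.cosh (t * Real.sqrt (R2 + (2 * ip s + N2 s))) ≤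
          Real.cosh (t * Real.sqrt (r^2 + c^2 + 2 * ip s)) := by
        have harg0 : (0:ℝ) ≤ R2 + (2 * ip s + N2 s) := by
          rw [← hexp s]; exact Finset.sum_nonneg (fun i _ => sq_nonneg _)
        have hle : R2 + (2 * ip s + N2 s) ≤ r^2 + c^2 + 2 * ip s := by
          have := hN2c s hs
          rw [hr2]; linarith
        apply Real.cosh_le_cosh.2
        rw [abs_of_nonneg (by positivity : (0:ℝ) ≤ t * Real.sqrt (R2 + (2 * ip s + N2 s))),
            abs_of_nonneg (by positivity : (0:ℝ) ≤ t * Real.sqrt (r^2 + c^2 + 2 * ip s))]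
        exact mul_le_mul_of_nonneg_left (Real.sqrt_le_sqrt hle) ht
      refine le_trans hmono ?_
      have := aux_chord ht hrpos hcpos (u := 2 * ip s) (by
        rw [abs_mul, abs_of_nonneg (by norm_num : (0:ℝ) ≤ 2)]
        calc (2:ℝ) * |ip s| ≤ 2 * (r * c) := by linarith [hipabs]
        _ = 2 * r * c := by ring)
      exact this
  calc ∑ s ∈ A, q s * Real.cosh (t * Real.sqrt (∑ i, (x i + v s i)^2))
      = ∑ s ∈ A, q s * Real.cosh (t * Real.sqrt (R2 + (2 * ip s + N2 s))) := by
        exact Finset.sum_congr rfl (fun s _ => by rw [hexp s])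
    _ ≤ ∑ s ∈ A, q s * (CC + (2 * ip s) * K) := by
        apply Finset.sum_le_sum
        intro s hs
        exact mul_le_mul_of_nonneg_left (key s hs) (hq0 s hs)
    _ = CC * (∑ s ∈ A, q s) + (2 * K) * (∑ s ∈ A, q s * ip s) := by
        rw [Finset.mul_sum, Finset.mul_sum, ← Finset.sum_add_distrib]
        exact Finset.sum_congr rfl (fun s _ => by ring)
    _ = CC := by
        have hip0 : ∑ s ∈ A, q s * ip s = 0 := by
          have h1 : ∀ s, q s * ip s = ∑ i, x i * (q s * v s i) := by
            intro s
            rw [hip_def, Finset.mul_sum]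
            exact Finset.sum_congr rfl (fun i _ => by ring)
          calc ∑ s ∈ A, q s * ip s = ∑ s ∈ A, ∑ i, x i * (q s * v s i) :=
                Finset.sum_congr rfl (fun s _ => h1 s)
          _ = ∑ i, ∑ s ∈ A, x i * (q s * v s i) := Finset.sum_comm
          _ = ∑ i : Fin d, x i * (∑ s ∈ A, q s * v s i) := by
              exact Finset.sum_congr rfl (fun i _ => by rw [Finset.mul_sum])
          _ = 0 := by simp [hmean]
        rw [hip0, hq1]
        ring
    _ ≤ Real.cosh (t * r) * Real.exp (t^2 * c^2 / 2) := by
        rw [hCC_def]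
        have h1 : Real.cosh (t*c) ≤ Real.exp (t^2*c^2/2) := by
          have := Real.cosh_le_exp_half_sq (t*c)
          calc Real.cosh (t*c) ≤ Real.exp ((t*c)^2/2) := this
          _ = Real.exp (t^2*c^2/2) := by ring_nf
        exact mul_le_mul_of_nonneg_left h1 (Real.cosh_pos _).le
section ConsRank
variable {d : ℕ}

noncomputable def consFun {S : Finset (Fin d)} (s : {x // x ∈ S}) (σ' : Ranking (S.erase s.1))
    (i : Fin S.card) : {x // x ∈ S} :=
  if h : i.val = 0 then s
  else ⟨(σ' ⟨i.val - 1, by rw [Finset.card_erase_of_mem s.2]; have := i.isLt; omega⟩).1,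
    Finset.mem_of_mem_erase (σ' _).2⟩

lemma consFun_zero {S : Finset (Fin d)} (s : {x // x ∈ S}) (σ' : Ranking (S.erase s.1))
    (i : Fin S.card) (hi : i.val = 0) : consFun s σ' i = s := by
  unfold consFun; rw [dif_pos hi]

lemma consFun_succ {S : Finset (Fin d)} (s : {x // x ∈ S}) (σ' : Ranking (S.erase s.1))
    (k : Fin (S.erase s.1).card) (i : Fin S.card) (hik : i.val = k.val + 1) :
    (consFun s σ' i).1 = (σ' k).1 := by
  unfold consFun
  rw [dif_neg (by omega)]
  exact congrArg (fun z => (σ' z).1) (Fin.ext (by simp [hik]))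

lemma consFun_ne {S : Finset (Fin d)} (s : {x // x ∈ S}) (σ' : Ranking (S.erase s.1))
    (i : Fin S.card) (hi : ¬ i.val = 0) : (consFun s σ' i).1 ≠ s.1 := by
  unfold consFun
  rw [dif_neg hi]
  exact Finset.ne_of_mem_erase (σ' _).2

lemma consFun_injective {S : Finset (Fin d)} (s : {x // x ∈ S}) (σ' : Ranking (S.erase s.1)) :
    Function.Injective (consFun s σ') := by
  intro i j hij
  by_cases hi : i.val = 0 <;> by_cases hj : j.val = 0
  · exact Fin.ext (by omega)
  · exfalso
    apply consFun_ne s σ' j hj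
    rw [← hij, consFun_zero s σ' i hi]
  · exfalso
    apply consFun_ne s σ' i hi
    rw [hij, consFun_zero s σ' j hj]
  · have hie : (S.erase s.1).card = S.card - 1 := Finset.card_erase_of_mem s.2
    have hki : i.val - 1 < (S.erase s.1).card := by rw [hie]; have := i.isLt; omega
    have hkj : j.val - 1 < (S.erase s.1).card := by rw [hie]; have := j.isLt; omega
    have h1 : (consFun s σ' i).1 = (σ' ⟨i.val - 1, hki⟩).1 :=
      consFun_succ s σ' ⟨i.val - 1, hki⟩ i (by simp; omega)
    have h2 : (consFun s σ' j).1 = (σ' ⟨j.val - 1, hkj⟩).1 :=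
      consFun_succ s σ' ⟨j.val - 1, hkj⟩ j (by simp; omega)
    have h3 : (σ' ⟨i.val - 1, hki⟩).1 = (σ' ⟨j.val - 1, hkj⟩).1 := by
      rw [← h1, ← h2, hij]
    have h4 := σ'.injective (Subtype.ext h3)
    have h5 : i.val - 1 = j.val - 1 := congrArg Fin.val h4
    exact Fin.ext (by omega)

noncomputable def consRank {S : Finset (Fin d)} (s : {x // x ∈ S})
    (σ' : Ranking (S.erase s.1)) : Ranking S :=
  Equiv.ofBijective (consFun s σ')
    ((Fintype.bijective_iff_injective_and_card _).2
      ⟨consFun_injective s σ', by simp [Fintype.card_coe]⟩)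

lemma consRank_apply {S : Finset (Fin d)} (s : {x // x ∈ S}) (σ' : Ranking (S.erase s.1))
    (i : Fin S.card) : consRank s σ' i = consFun s σ' i := rfl

lemma consRank_zero {S : Finset (Fin d)} (s : {x // x ∈ S}) (σ' : Ranking (S.erase s.1))
    (i : Fin S.card) (hi : i.val = 0) : consRank s σ' i = s := by
  rw [consRank_apply]; exact consFun_zero s σ' i hi

lemma consRank_succ {S : Finset (Fin d)} (s : {x // x ∈ S}) (σ' : Ranking (S.erase s.1))
    (k : Fin (S.erase s.1).card) (i : Fin S.card) (hik : i.val = k.val + 1) :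
    (consRank s σ' i).1 = (σ' k).1 := by
  rw [consRank_apply]; exact consFun_succ s σ' k i hik

lemma card_pos_of_mem {S : Finset (Fin d)} (s : {x // x ∈ S}) : 0 < S.card :=
  Finset.card_pos.2 ⟨s.1, s.2⟩

lemma rankOf_consRank_self {S : Finset (Fin d)} (s : {x // x ∈ S})
    (σ' : Ranking (S.erase s.1)) : rankOf (consRank s σ') s = 1 := by
  unfold rankOf
  have h : (consRank s σ').symm s = ⟨0, card_pos_of_mem s⟩ := by
    rw [Equiv.symm_apply_eq]
    exact (consRank_zero s σ' ⟨0, card_pos_of_mem s⟩ rfl).symm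
  rw [h]

lemma rankOf_consRank_of_mem {S : Finset (Fin d)} (s : {x // x ∈ S})
    (σ' : Ranking (S.erase s.1)) (x : {x // x ∈ S}) (hx : x.1 ∈ S.erase s.1) :
    rankOf (consRank s σ') x = rankOf σ' ⟨x.1, hx⟩ + 1 := by
  unfold rankOf
  have hie : (S.erase s.1).card = S.card - 1 := Finset.card_erase_of_mem s.2
  have hlt : (σ'.symm ⟨x.1, hx⟩).val + 1 < S.card := by
    have h1 := (σ'.symm ⟨x.1, hx⟩).isLt
    have h2 := card_pos_of_mem s
    omega
  have h : (consRank s σ').symm x = ⟨(σ'.symm ⟨x.1, hx⟩).val + 1, hlt⟩ := by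
    rw [Equiv.symm_apply_eq]
    apply Subtype.ext
    rw [consRank_succ s σ' (σ'.symm ⟨x.1, hx⟩) _ rfl, Equiv.apply_symm_apply]
  rw [h]

lemma sum_ranking_eq {S : Finset (Fin d)} (hS : 0 < S.card) (f : Ranking S → ℝ) :
    ∑ σ : Ranking S, f σ =
      ∑ s ∈ S.attach, ∑ σ' : Ranking (S.erase s.1), f (consRank s σ') := by
  classical
  set Φ : (Σ s : {x // x ∈ S}, Ranking (S.erase s.1)) → Ranking S :=
    fun a => consRank a.1 a.2 with hΦ
  have hinj : Function.Injective Φ := by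
    rintro ⟨s, σ'⟩ ⟨u, τ'⟩ h
    have hsu : s = u := by
      have h1 : consRank s σ' ⟨0, hS⟩ = s := consRank_zero s σ' ⟨0, hS⟩ rfl
      have h2 : consRank u τ' ⟨0, hS⟩ = u := consRank_zero u τ' ⟨0, hS⟩ rfl
      rw [← h1, ← h2]
      exact congrFun (congrArg (fun (e : Ranking S) => e.toFun) h) ⟨0, hS⟩
    subst hsu
    have hστ : σ' = τ' := by
      apply Equiv.ext
      intro k
      have hlt : k.val + 1 < S.card := by
        have h1 := k.isLt
        have h2 : (S.erase s.1).card = S.card - 1 := Finset.card_erase_of_mem s.2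
        have h3 := hS
        omega
      apply Subtype.ext
      have h1 : (consRank s σ' ⟨k.val + 1, hlt⟩).1 = (σ' k).1 :=
        consRank_succ s σ' k ⟨k.val + 1, hlt⟩ rfl
      have h2 : (consRank s τ' ⟨k.val + 1, hlt⟩).1 = (τ' k).1 :=
        consRank_succ s τ' k ⟨k.val + 1, hlt⟩ rfl
      rw [← h1, ← h2]
      exact congrArg (fun (e : Ranking S) => (e ⟨k.val + 1, hlt⟩).1) h
    rw [hστ]
  have hcard : Fintype.card (Σ s : {x // x ∈ S}, Ranking (S.erase s.1)) =
      Fintype.card (Ranking S) := by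
    rw [Fintype.card_sigma]
    have hc : ∀ s : {x // x ∈ S}, Fintype.card (Ranking (S.erase s.1)) =
        Nat.factorial (S.card - 1) := by
      intro s
      have e : Fin (S.erase s.1).card ≃ {x // x ∈ S.erase s.1} :=
        (Finset.equivFin _).symm
      rw [Fintype.card_equiv e, Fintype.card_fin, Finset.card_erase_of_mem s.2]
    simp only [hc]
    rw [Finset.sum_const, Fintype.card_equiv ((Finset.equivFin S).symm), Fintype.card_fin]
    simp only [smul_eq_mul, Finset.card_univ, Fintype.card_coe]
    rw [← Nat.succ_pred_eq_of_pos hS, Nat.factorial_succ]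
    simp
  have hbij : Function.Bijective Φ :=
    (Fintype.bijective_iff_injective_and_card Φ).2 ⟨hinj, hcard⟩
  rw [← Fintype.sum_bijective Φ hbij (fun a => f (Φ a)) f (fun a => rfl)]
  rw [← Finset.univ_sigma_univ, Finset.sum_sigma]
  rw [Finset.univ_eq_attach]
end ConsRank

section PLFact
variable {d : ℕ} (θ : Fin d → ℝ)

lemma PLProb_consRank {S : Finset (Fin d)} (s : {x // x ∈ S}) (σ' : Ranking (S.erase s.1)) :
    PLProb θ S (consRank s σ') =
      (Real.exp (θ s.1) / ∑ x ∈ S, Real.exp (θ x)) * PLProb θ (S.erase s.1) σ' := by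
  classical
  set m := (S.erase s.1).card with hm
  have hκ : S.card = m + 1 := by
    rw [hm, Finset.card_erase_of_mem s.2]
    have := card_pos_of_mem s
    omega
  set e : Fin (m+1) ≃ Fin S.card := finCongr hκ.symm with he
  have heval : ∀ b : Fin (m+1), (e b).val = b.val := fun b => rfl
  set F : Fin S.card → ℝ := fun a =>
    Real.exp (θ ((consRank s σ') a).1) /
      ∑ a' ∈ Finset.univ.filter (fun a' => a ≤ a'), Real.exp (θ ((consRank s σ') a').1)
    with hF
  have h0 : PLProb θ S (consRank s σ') = ∏ b : Fin (m+1), F (e b) := by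
    rw [PLProb, Equiv.prod_comp e F]
  rw [h0, Fin.prod_univ_succ]
  -- head factor
  have hhead : F (e 0) = Real.exp (θ s.1) / ∑ x ∈ S, Real.exp (θ x) := by
    rw [hF]
    dsimp only
    have h1 : ((consRank s σ') (e 0)).1 = s.1 :=
      congrArg Subtype.val (consRank_zero s σ' (e 0) (heval 0))
    have h2 : (Finset.univ.filter (fun a' => e 0 ≤ a')) = Finset.univ := by
      apply Finset.filter_true_of_mem
      intro a' _
      show (e 0).val ≤ a'.val
      rw [heval]
      exact Nat.zero_le _
    rw [h1, h2]
    congr 1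
    rw [Equiv.sum_comp (consRank s σ') (fun x => Real.exp (θ x.1)), Finset.univ_eq_attach]
    exact Finset.sum_attach S (fun x => Real.exp (θ x))
  rw [hhead]
  congr 1
  -- tail factors
  rw [PLProb]
  apply Finset.prod_congr rfl
  intro c _
  have hnum : ((consRank s σ') (e c.succ)).1 = (σ' c).1 :=
    consRank_succ s σ' c (e c.succ) (heval c.succ)
  have hden : ∑ a' ∈ Finset.univ.filter (fun a' => e c.succ ≤ a'),
      Real.exp (θ ((consRank s σ') a').1) =
      ∑ c' ∈ Finset.univ.filter (fun c' => c ≤ c'), Real.exp (θ (σ' c').1) := by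
    have hstep1 : ∑ a' ∈ Finset.univ.filter (fun a' => e c.succ ≤ a'),
        Real.exp (θ ((consRank s σ') a').1) =
        ∑ b : Fin (m+1), if c.succ ≤ b then Real.exp (θ ((consRank s σ') (e b)).1) else 0 := by
      rw [Finset.sum_filter]
      rw [← Equiv.sum_comp e
        (fun a' => if e c.succ ≤ a' then Real.exp (θ ((consRank s σ') a').1) else 0)]
      apply Finset.sum_congr rfl
      intro b _
      apply if_congr _ rfl rfl
      rw [Fin.le_def, Fin.le_def, heval, heval]
    rw [hstep1, Fin.sum_univ_succ]
    have hz : ¬ (c.succ ≤ (0 : Fin (m+1))) := by simp [Fin.le_def]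
    rw [if_neg hz, zero_add]
    have hterm : ∀ c' : Fin m,
        (if c.succ ≤ c'.succ then Real.exp (θ ((consRank s σ') (e c'.succ)).1) else 0) =
        (if c ≤ c' then Real.exp (θ (σ' c').1) else 0) := by
      intro c'
      apply if_congr (Fin.succ_le_succ_iff)
      · exact congrArg Real.exp
          (congrArg θ (consRank_succ s σ' c' (e c'.succ) (heval c'.succ)))
      · rfl
    rw [Finset.sum_congr rfl (fun c' _ => hterm c'), ← Finset.sum_filter]
  rw [hF]
  dsimp only
  rw [hnum, hden]

lemma sum_PLProb_eq_one : ∀ (k : ℕ) (S : Finset (Fin d)), S.card = k →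
    ∑ σ : Ranking S, PLProb θ S σ = 1 := by
  intro k
  induction k with
  | zero =>
    intro S hS
    have hempty : IsEmpty (Fin S.card) := by rw [hS]; infer_instance
    have h1 : ∀ σ : Ranking S, PLProb θ S σ = 1 := by
      intro σ
      rw [PLProb, Finset.univ_eq_empty, Finset.prod_empty]
    rw [Finset.sum_congr rfl (fun σ _ => h1 σ), Finset.sum_const, Finset.card_univ]
    rw [Fintype.card_equiv (Finset.equivFin S).symm, Fintype.card_fin, hS]
    simp
  | succ k ih =>
    intro S hS
    have hpos : 0 < S.card := by omega
    rw [sum_ranking_eq hpos]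
    have hZ : 0 < ∑ x ∈ S, Real.exp (θ x) := by
      apply Finset.sum_pos (fun x _ => Real.exp_pos _)
      exact Finset.card_pos.1 hpos
    have hinner : ∀ s : {x // x ∈ S},
        ∑ σ' : Ranking (S.erase s.1), PLProb θ S (consRank s σ') =
          Real.exp (θ s.1) / ∑ x ∈ S, Real.exp (θ x) := by
      intro s
      have : ∀ σ' : Ranking (S.erase s.1), PLProb θ S (consRank s σ') =
          (Real.exp (θ s.1) / ∑ x ∈ S, Real.exp (θ x)) * PLProb θ (S.erase s.1) σ' :=
        fun σ' => PLProb_consRank θ s σ'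
      rw [Finset.sum_congr rfl (fun σ' _ => this σ'), ← Finset.mul_sum]
      rw [ih (S.erase s.1) (by rw [Finset.card_erase_of_mem s.2, hS]; omega)]
      ring
    rw [Finset.sum_congr rfl (fun s _ => hinner s)]
    rw [← Finset.sum_div]
    rw [Finset.sum_attach S (fun x => Real.exp (θ x))]
    exact div_self (ne_of_gt hZ)

end PLFact

section XvDefs
variable {d : ℕ}

open Classical in
noncomputable def Xv1 (θ : Fin d → ℝ) (S : Finset (Fin d)) (pp : ℕ) (σ : Ranking S)
    (i : Fin d) : ℝ :=
  ∑ i0 ∈ S.attach, ∑ i0' ∈ S.attach,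
    if i0.1 = i ∧ i0'.1 ≠ i ∧
        ((rankOf σ i0' = pp ∧ pp < rankOf σ i0) ∨
         (rankOf σ i0 = pp ∧ pp < rankOf σ i0')) then
      ((if rankOf σ i0 < rankOf σ i0' then (1 : ℝ) else 0) -
        Real.exp (θ i0.1) / (Real.exp (θ i0.1) + Real.exp (θ i0'.1)))
    else 0

lemma gradLRB_eq_sum_Xv1 (θ : Fin d → ℝ) {n : ℕ} (S : Fin n → Finset (Fin d))
    (ℓ : Fin n → ℕ) (p : (j : Fin n) → Fin (ℓ j) → ℕ) (lam : (j : Fin n) → Fin (ℓ j) → ℝ)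
    (σ : ∀ j, Ranking (S j)) (i : Fin d) :
    gradLRB S ℓ p lam θ σ i = ∑ j, ∑ a, lam j a * Xv1 θ (S j) (p j a) (σ j) i := by
  unfold gradLRB Xv1
  apply Finset.sum_congr rfl; intro j _
  apply Finset.sum_congr rfl; intro a _
  rw [Finset.mul_sum]
  apply Finset.sum_congr rfl; intro i0 _
  rw [Finset.mul_sum]
  apply Finset.sum_congr rfl; intro i0' _
  rw [mul_ite, mul_zero]

lemma sum_attach_erase {M : Type*} [AddCommMonoid M] {S : Finset (Fin d)} (s : {x // x ∈ S})
    (F : {x // x ∈ S} → M) :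
    ∑ x ∈ S.attach, F x =
      F s + ∑ y ∈ (S.erase s.1).attach, F ⟨y.1, Finset.mem_of_mem_erase y.2⟩ := by
  classical
  rw [← Finset.add_sum_erase _ F (Finset.mem_attach S s)]
  congr 1
  refine Finset.sum_bij'
    (fun (x : {x // x ∈ S}) (hx : x ∈ S.attach.erase s) =>
      (⟨x.1, Finset.mem_erase.2
        ⟨fun h => (Finset.mem_erase.1 hx).1 (Subtype.ext h), x.2⟩⟩ : {y // y ∈ S.erase s.1}))
    (fun (y : {y // y ∈ S.erase s.1}) (_ : y ∈ (S.erase s.1).attach) =>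
      (⟨y.1, Finset.mem_of_mem_erase y.2⟩ : {x // x ∈ S}))
    (fun x hx => Finset.mem_attach _ _)
    (fun y _ => Finset.mem_erase.2
      ⟨fun h => (Finset.mem_erase.1 y.2).1 (congrArg Subtype.val h), Finset.mem_attach _ _⟩)
    (fun x hx => rfl) (fun y hy => rfl) (fun x hx => rfl)
end XvDefs

section VV
variable {d : ℕ}

noncomputable def ee (θ : Fin d → ℝ) (a b : Fin d) : ℝ :=
  Real.exp (θ a) / (Real.exp (θ a) + Real.exp (θ b))

open Classical in
noncomputable def vv (θ : Fin d → ℝ) (S : Finset (Fin d)) (s : Fin d) (i : Fin d) : ℝ :=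
  if i = s then ∑ x ∈ S.erase s, ee θ x s
  else if i ∈ S.erase s then -(ee θ i s) else 0

lemma ee_nonneg (θ : Fin d → ℝ) (a b : Fin d) : 0 ≤ ee θ a b := by
  unfold ee; positivity

lemma ee_le_one (θ : Fin d → ℝ) (a b : Fin d) : ee θ a b ≤ 1 := by
  unfold ee
  rw [div_le_one (by positivity)]
  have := Real.exp_pos (θ b)
  linarith

lemma ee_symm_identity (θ : Fin d → ℝ) (Z : ℝ) (hZ : Z ≠ 0) (a b : Fin d) :
    (Real.exp (θ a) / Z) * ee θ b a = (Real.exp (θ b) / Z) * ee θ a b := by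
  unfold ee
  have h1 : Real.exp (θ b) + Real.exp (θ a) ≠ 0 := by positivity
  have h2 : Real.exp (θ a) + Real.exp (θ b) ≠ 0 := by positivity
  field_simp
  ring
end VV

section Recursion
variable {d : ℕ} (θ : Fin d → ℝ)

lemma ee_compl (a b : Fin d) :
    1 - Real.exp (θ a) / (Real.exp (θ a) + Real.exp (θ b)) = ee θ b a := by
  unfold ee
  have h1 : Real.exp (θ a) + Real.exp (θ b) ≠ 0 := by positivity
  have h2 : Real.exp (θ b) + Real.exp (θ a) ≠ 0 := by positivity
  field_simp
  ring

lemma rank_consRank_lift {S : Finset (Fin d)} (s : {x // x ∈ S}) (σ' : Ranking (S.erase s.1))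
    (y : {y // y ∈ S.erase s.1}) :
    rankOf (consRank s σ') ⟨y.1, Finset.mem_of_mem_erase y.2⟩ = rankOf σ' y + 1 :=
  rankOf_consRank_of_mem s σ' ⟨y.1, Finset.mem_of_mem_erase y.2⟩ y.2

lemma rankOf_pos {S : Finset (Fin d)} (σ : Ranking S) (x : {x // x ∈ S}) :
    1 ≤ rankOf σ x := Nat.le_add_left 1 _

lemma Xv1_consRank_ge2 {S : Finset (Fin d)} (s : {x // x ∈ S}) (σ' : Ranking (S.erase s.1))
    (pp : ℕ) (hpp : 2 ≤ pp) (i : Fin d) :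
    Xv1 θ S pp (consRank s σ') i = Xv1 θ (S.erase s.1) (pp - 1) σ' i := by
  have hr_s : rankOf (consRank s σ') s = 1 := rankOf_consRank_self s σ'
  have hr_y := rank_consRank_lift s σ'
  unfold Xv1
  rw [sum_attach_erase s]
  rw [sum_attach_erase s (F := fun i0' => if (s : {x // x ∈ S}).1 = i ∧ i0'.1 ≠ i ∧
        ((rankOf (consRank s σ') i0' = pp ∧ pp < rankOf (consRank s σ') s) ∨
         (rankOf (consRank s σ') s = pp ∧ pp < rankOf (consRank s σ') i0')) then
      ((if rankOf (consRank s σ') s < rankOf (consRank s σ') i0' then (1 : ℝ) else 0) -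
        Real.exp (θ s.1) / (Real.exp (θ s.1) + Real.exp (θ i0'.1)))
    else 0)]
  have h1 : (if (s : {x // x ∈ S}).1 = i ∧ (s : {x // x ∈ S}).1 ≠ i ∧
        ((rankOf (consRank s σ') s = pp ∧ pp < rankOf (consRank s σ') s) ∨
         (rankOf (consRank s σ') s = pp ∧ pp < rankOf (consRank s σ') s)) then
      ((if rankOf (consRank s σ') s < rankOf (consRank s σ') s then (1 : ℝ) else 0) -
        Real.exp (θ s.1) / (Real.exp (θ s.1) + Real.exp (θ s.1)))
    else 0) = 0 := by
    apply if_neg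
    rintro ⟨hA, hB, -⟩
    exact hB hA
  rw [h1]
  have h2 : ∑ y' ∈ (S.erase s.1).attach,
      (if (s : {x // x ∈ S}).1 = i ∧ (⟨y'.1, Finset.mem_of_mem_erase y'.2⟩ : {x // x ∈ S}).1 ≠ i ∧
        ((rankOf (consRank s σ') ⟨y'.1, Finset.mem_of_mem_erase y'.2⟩ = pp ∧
            pp < rankOf (consRank s σ') s) ∨
         (rankOf (consRank s σ') s = pp ∧
            pp < rankOf (consRank s σ') ⟨y'.1, Finset.mem_of_mem_erase y'.2⟩)) then
      ((if rankOf (consRank s σ') s <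
            rankOf (consRank s σ') ⟨y'.1, Finset.mem_of_mem_erase y'.2⟩ then (1 : ℝ) else 0) -
        Real.exp (θ s.1) / (Real.exp (θ s.1) + Real.exp (θ y'.1)))
    else 0) = 0 := by
    apply Finset.sum_eq_zero
    intro y' _
    apply if_neg
    rintro ⟨-, -, hC | hC⟩
    · rw [hr_s] at hC; omega
    · rw [hr_s] at hC; omega
  rw [h2, add_zero, zero_add]
  apply Finset.sum_congr rfl
  intro y _
  rw [sum_attach_erase s (F := fun i0' =>
      if (⟨y.1, Finset.mem_of_mem_erase y.2⟩ : {x // x ∈ S}).1 = i ∧ i0'.1 ≠ i ∧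
        ((rankOf (consRank s σ') i0' = pp ∧
            pp < rankOf (consRank s σ') ⟨y.1, Finset.mem_of_mem_erase y.2⟩) ∨
         (rankOf (consRank s σ') ⟨y.1, Finset.mem_of_mem_erase y.2⟩ = pp ∧
            pp < rankOf (consRank s σ') i0')) then
      ((if rankOf (consRank s σ') ⟨y.1, Finset.mem_of_mem_erase y.2⟩ <
            rankOf (consRank s σ') i0' then (1 : ℝ) else 0) -
        Real.exp (θ y.1) / (Real.exp (θ y.1) + Real.exp (θ i0'.1)))
    else 0)]
  have h3 : (if (⟨y.1, Finset.mem_of_mem_erase y.2⟩ : {x // x ∈ S}).1 = i ∧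
        (s : {x // x ∈ S}).1 ≠ i ∧
        ((rankOf (consRank s σ') s = pp ∧
            pp < rankOf (consRank s σ') ⟨y.1, Finset.mem_of_mem_erase y.2⟩) ∨
         (rankOf (consRank s σ') ⟨y.1, Finset.mem_of_mem_erase y.2⟩ = pp ∧
            pp < rankOf (consRank s σ') s)) then
      ((if rankOf (consRank s σ') ⟨y.1, Finset.mem_of_mem_erase y.2⟩ <
            rankOf (consRank s σ') s then (1 : ℝ) else 0) -
        Real.exp (θ y.1) / (Real.exp (θ y.1) + Real.exp (θ s.1)))
    else 0) = 0 := by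
    apply if_neg
    rintro ⟨-, -, hC | hC⟩
    · rw [hr_s] at hC; omega
    · rw [hr_s] at hC; omega
  rw [h3, zero_add]
  apply Finset.sum_congr rfl
  intro y' _
  rw [hr_y y, hr_y y']
  apply if_congr
  · constructor
    · rintro ⟨hA, hB, hC⟩
      exact ⟨hA, hB, by omega⟩
    · rintro ⟨hA, hB, hC⟩
      exact ⟨hA, hB, by omega⟩
  · apply congrArg (fun z => z - _)
    apply if_congr _ rfl rfl
    omega
  · rfl

end Recursion

section RecursionOne
variable {d : ℕ} (θ : Fin d → ℝ)

lemma Xv1_consRank_one {S : Finset (Fin d)} (s : {x // x ∈ S}) (σ' : Ranking (S.erase s.1))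
    (i : Fin d) :
    Xv1 θ S 1 (consRank s σ') i = vv θ S s.1 i := by
  have hr_s : rankOf (consRank s σ') s = 1 := rankOf_consRank_self s σ'
  have hr_y := rank_consRank_lift s σ'
  unfold Xv1
  rw [sum_attach_erase s]
  rw [sum_attach_erase s (F := fun i0' => if (s : {x // x ∈ S}).1 = i ∧ i0'.1 ≠ i ∧
        ((rankOf (consRank s σ') i0' = 1 ∧ 1 < rankOf (consRank s σ') s) ∨
         (rankOf (consRank s σ') s = 1 ∧ 1 < rankOf (consRank s σ') i0')) then
      ((if rankOf (consRank s σ') s < rankOf (consRank s σ') i0' then (1 : ℝ) else 0) -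
        Real.exp (θ s.1) / (Real.exp (θ s.1) + Real.exp (θ i0'.1)))
    else 0)]
  have h1 : (if (s : {x // x ∈ S}).1 = i ∧ (s : {x // x ∈ S}).1 ≠ i ∧
        ((rankOf (consRank s σ') s = 1 ∧ 1 < rankOf (consRank s σ') s) ∨
         (rankOf (consRank s σ') s = 1 ∧ 1 < rankOf (consRank s σ') s)) then
      ((if rankOf (consRank s σ') s < rankOf (consRank s σ') s then (1 : ℝ) else 0) -
        Real.exp (θ s.1) / (Real.exp (θ s.1) + Real.exp (θ s.1)))
    else 0) = 0 := by
    apply if_neg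
    rintro ⟨hA, hB, -⟩
    exact hB hA
  rw [h1, zero_add]
  have h2 : ∀ y' : {y // y ∈ S.erase s.1},
      (if (s : {x // x ∈ S}).1 = i ∧
          (⟨y'.1, Finset.mem_of_mem_erase y'.2⟩ : {x // x ∈ S}).1 ≠ i ∧
        ((rankOf (consRank s σ') ⟨y'.1, Finset.mem_of_mem_erase y'.2⟩ = 1 ∧
            1 < rankOf (consRank s σ') s) ∨
         (rankOf (consRank s σ') s = 1 ∧
            1 < rankOf (consRank s σ') ⟨y'.1, Finset.mem_of_mem_erase y'.2⟩)) then
      ((if rankOf (consRank s σ') s <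
            rankOf (consRank s σ') ⟨y'.1, Finset.mem_of_mem_erase y'.2⟩ then (1 : ℝ) else 0) -
        Real.exp (θ s.1) / (Real.exp (θ s.1) + Real.exp (θ y'.1)))
    else 0) = (if s.1 = i then ee θ y'.1 s.1 else 0) := by
    intro y'
    have hylt : 1 < rankOf (consRank s σ') ⟨y'.1, Finset.mem_of_mem_erase y'.2⟩ := by
      rw [hr_y y']
      have := rankOf_pos σ' y'
      omega
    by_cases hsi : s.1 = i
    · have hne : y'.1 ≠ i := fun h => (Finset.mem_erase.1 y'.2).1 (h.trans hsi.symm)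
      rw [if_pos ⟨hsi, hne, Or.inr ⟨hr_s, hylt⟩⟩, if_pos (by rw [hr_s]; exact hylt),
        ee_compl, if_pos hsi]
    · rw [if_neg (fun h => hsi h.1), if_neg hsi]
  rw [Finset.sum_congr rfl (fun y' _ => h2 y')]
  have h3 : ∀ y : {y // y ∈ S.erase s.1},
      (if (⟨y.1, Finset.mem_of_mem_erase y.2⟩ : {x // x ∈ S}).1 = i ∧
          (s : {x // x ∈ S}).1 ≠ i ∧
        ((rankOf (consRank s σ') s = 1 ∧
            1 < rankOf (consRank s σ') ⟨y.1, Finset.mem_of_mem_erase y.2⟩) ∨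
         (rankOf (consRank s σ') ⟨y.1, Finset.mem_of_mem_erase y.2⟩ = 1 ∧
            1 < rankOf (consRank s σ') s)) then
      ((if rankOf (consRank s σ') ⟨y.1, Finset.mem_of_mem_erase y.2⟩ <
            rankOf (consRank s σ') s then (1 : ℝ) else 0) -
        Real.exp (θ y.1) / (Real.exp (θ y.1) + Real.exp (θ s.1)))
    else 0) = (if y.1 = i then -(ee θ y.1 s.1) else 0) := by
    intro y
    have hylt : 1 < rankOf (consRank s σ') ⟨y.1, Finset.mem_of_mem_erase y.2⟩ := by
      rw [hr_y y]
      have := rankOf_pos σ' y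
      omega
    by_cases hyi : y.1 = i
    · have hne : s.1 ≠ i := fun h => (Finset.mem_erase.1 y.2).1 (hyi.trans h.symm)
      rw [if_pos ⟨hyi, hne, Or.inl ⟨hr_s, hylt⟩⟩, if_neg (by rw [hr_s]; omega),
        if_pos hyi, zero_sub]
      rfl
    · rw [if_neg (fun h => hyi h.1), if_neg hyi]
  have h4 : ∀ y : {y // y ∈ S.erase s.1},
      (∑ y' ∈ (S.erase s.1).attach,
        if (⟨y.1, Finset.mem_of_mem_erase y.2⟩ : {x // x ∈ S}).1 = i ∧
            (⟨y'.1, Finset.mem_of_mem_erase y'.2⟩ : {x // x ∈ S}).1 ≠ i ∧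
          ((rankOf (consRank s σ') ⟨y'.1, Finset.mem_of_mem_erase y'.2⟩ = 1 ∧
              1 < rankOf (consRank s σ') ⟨y.1, Finset.mem_of_mem_erase y.2⟩) ∨
           (rankOf (consRank s σ') ⟨y.1, Finset.mem_of_mem_erase y.2⟩ = 1 ∧
              1 < rankOf (consRank s σ') ⟨y'.1, Finset.mem_of_mem_erase y'.2⟩)) then
        ((if rankOf (consRank s σ') ⟨y.1, Finset.mem_of_mem_erase y.2⟩ <
              rankOf (consRank s σ') ⟨y'.1, Finset.mem_of_mem_erase y'.2⟩ then (1 : ℝ) else 0) -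
          Real.exp (θ y.1) / (Real.exp (θ y.1) + Real.exp (θ y'.1)))
      else 0) = 0 := by
    intro y
    apply Finset.sum_eq_zero
    intro y' _
    apply if_neg
    rintro ⟨-, -, hC | hC⟩
    · have := rankOf_pos σ' y'
      rw [hr_y y'] at hC
      omega
    · have := rankOf_pos σ' y
      rw [hr_y y] at hC
      omega
  have h5 : ∀ y : {y // y ∈ S.erase s.1},
      (∑ i0' ∈ S.attach,
        if (⟨y.1, Finset.mem_of_mem_erase y.2⟩ : {x // x ∈ S}).1 = i ∧ i0'.1 ≠ i ∧
          ((rankOf (consRank s σ') i0' = 1 ∧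
              1 < rankOf (consRank s σ') ⟨y.1, Finset.mem_of_mem_erase y.2⟩) ∨
           (rankOf (consRank s σ') ⟨y.1, Finset.mem_of_mem_erase y.2⟩ = 1 ∧
              1 < rankOf (consRank s σ') i0')) then
        ((if rankOf (consRank s σ') ⟨y.1, Finset.mem_of_mem_erase y.2⟩ <
              rankOf (consRank s σ') i0' then (1 : ℝ) else 0) -
          Real.exp (θ y.1) / (Real.exp (θ y.1) + Real.exp (θ i0'.1)))
      else 0) = (if y.1 = i then -(ee θ y.1 s.1) else 0) := by
    intro y
    rw [sum_attach_erase s (F := fun i0' =>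
        if (⟨y.1, Finset.mem_of_mem_erase y.2⟩ : {x // x ∈ S}).1 = i ∧ i0'.1 ≠ i ∧
          ((rankOf (consRank s σ') i0' = 1 ∧
              1 < rankOf (consRank s σ') ⟨y.1, Finset.mem_of_mem_erase y.2⟩) ∨
           (rankOf (consRank s σ') ⟨y.1, Finset.mem_of_mem_erase y.2⟩ = 1 ∧
              1 < rankOf (consRank s σ') i0')) then
        ((if rankOf (consRank s σ') ⟨y.1, Finset.mem_of_mem_erase y.2⟩ <
              rankOf (consRank s σ') i0' then (1 : ℝ) else 0) -
          Real.exp (θ y.1) / (Real.exp (θ y.1) + Real.exp (θ i0'.1)))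
      else 0)]
    rw [h3 y, h4 y]
    exact add_zero _
  rw [Finset.sum_congr rfl (fun y _ => h5 y)]
  -- now assemble
  unfold vv
  by_cases hsi : i = s.1
  · rw [if_pos hsi]
    have hA : ∑ y' ∈ (S.erase s.1).attach, (if s.1 = i then ee θ y'.1 s.1 else 0) =
        ∑ x ∈ S.erase s.1, ee θ x s.1 := by
      rw [Finset.sum_congr rfl (fun y' _ => if_pos hsi.symm)]
      exact Finset.sum_attach (S.erase s.1) (fun x => ee θ x s.1)
    have hB : ∑ y ∈ (S.erase s.1).attach, (if y.1 = i then -(ee θ y.1 s.1) else 0) = 0 := by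
      apply Finset.sum_eq_zero
      intro y _
      apply if_neg
      intro h
      exact (Finset.mem_erase.1 y.2).1 (h.trans hsi)
    rw [hA, hB, add_zero]
  · rw [if_neg hsi]
    have hA : ∑ y' ∈ (S.erase s.1).attach, (if s.1 = i then ee θ y'.1 s.1 else 0) = 0 := by
      apply Finset.sum_eq_zero
      intro y' _
      exact if_neg (fun h => hsi h.symm)
    have hB : ∑ y ∈ (S.erase s.1).attach, (if y.1 = i then -(ee θ y.1 s.1) else 0) =
        if i ∈ S.erase s.1 then -(ee θ i s.1) else 0 := by
      rw [Finset.sum_attach (S.erase s.1) (fun x => if x = i then -(ee θ x s.1) else 0)]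
      rw [Finset.sum_ite_eq' (S.erase s.1) i (fun x => -(ee θ x s.1))]
    rw [hA, hB, zero_add]

end RecursionOne

section VVProps
variable {d : ℕ} (θ : Fin d → ℝ)

lemma sum_q_eq_one {S : Finset (Fin d)} (hS : S.Nonempty) :
    ∑ s ∈ S.attach, Real.exp (θ s.1) / (∑ x ∈ S, Real.exp (θ x)) = 1 := by
  have hZ : 0 < ∑ x ∈ S, Real.exp (θ x) := Finset.sum_pos (fun x _ => Real.exp_pos _) hS
  rw [Finset.sum_attach S (fun x => Real.exp (θ x) / (∑ x ∈ S, Real.exp (θ x)))]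
  rw [← Finset.sum_div]
  exact div_self (ne_of_gt hZ)

lemma vv_mean_zero {S : Finset (Fin d)} (hS : S.Nonempty) (i : Fin d) :
    ∑ s ∈ S.attach, (Real.exp (θ s.1) / ∑ x ∈ S, Real.exp (θ x)) * vv θ S s.1 i = 0 := by
  classical
  have hZ : (∑ x ∈ S, Real.exp (θ x)) ≠ 0 :=
    ne_of_gt (Finset.sum_pos (fun x _ => Real.exp_pos _) hS)
  rw [Finset.sum_attach S (fun x => (Real.exp (θ x) / ∑ x ∈ S, Real.exp (θ x)) * vv θ S x i)]
  by_cases hi : i ∈ S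
  · rw [← Finset.add_sum_erase _ _ hi]
    have h1 : vv θ S i i = ∑ x ∈ S.erase i, ee θ x i := if_pos rfl
    have h2 : ∀ s ∈ S.erase i, (Real.exp (θ s) / ∑ x ∈ S, Real.exp (θ x)) * vv θ S s i =
        -((Real.exp (θ s) / ∑ x ∈ S, Real.exp (θ x)) * ee θ i s) := by
      intro s hs
      have hne : i ≠ s := fun h => (Finset.mem_erase.1 hs).1 h.symm
      have him : i ∈ S.erase s := Finset.mem_erase.2 ⟨hne, hi⟩
      simp only [vv, if_neg hne, if_pos him]
      ring
    rw [Finset.sum_congr rfl h2, h1, Finset.mul_sum]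
    have h3 : ∀ x ∈ S.erase i,
        (Real.exp (θ i) / ∑ x ∈ S, Real.exp (θ x)) * ee θ x i =
        (Real.exp (θ x) / ∑ x ∈ S, Real.exp (θ x)) * ee θ i x :=
      fun x _ => ee_symm_identity θ _ hZ i x
    rw [Finset.sum_congr rfl h3, Finset.sum_neg_distrib]
    exact add_neg_cancel _
  · apply Finset.sum_eq_zero
    intro s hs
    have h1 : i ≠ s := fun h => hi (by rw [h]; exact hs)
    have h2 : i ∉ S.erase s := fun h => hi (Finset.mem_of_mem_erase h)
    simp only [vv, if_neg h1, if_neg h2, mul_zero]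

lemma vv_norm_sq_le {S : Finset (Fin d)} (s : Fin d) (hs : s ∈ S) :
    ∑ i, (vv θ S s i)^2 ≤ ((S.card : ℝ) - 1) * (S.card : ℝ) := by
  classical
  have hc1 : 1 ≤ S.card := Finset.card_pos.2 ⟨s, hs⟩
  have hcast : ((S.erase s).card : ℝ) = (S.card : ℝ) - 1 := by
    rw [Finset.card_erase_of_mem hs]
    push_cast [hc1]
    ring
  set A := ∑ x ∈ S.erase s, ee θ x s with hA
  have hA0 : 0 ≤ A := Finset.sum_nonneg (fun x _ => ee_nonneg θ x s)
  have hA1 : A ≤ (S.card : ℝ) - 1 := by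
    calc A ≤ ∑ _x ∈ S.erase s, (1:ℝ) := Finset.sum_le_sum (fun x _ => ee_le_one θ x s)
    _ = ((S.erase s).card : ℝ) := by simp
    _ = (S.card : ℝ) - 1 := hcast
  have hsplit : ∀ i, (vv θ S s i)^2 =
      (if i = s then A^2 else 0) + (if i ∈ S.erase s then (ee θ i s)^2 else 0) := by
    intro i
    by_cases h1 : i = s
    · subst h1
      simp only [vv, if_neg (Finset.notMem_erase i S), add_zero, hA]
      rw [if_pos trivial, if_pos trivial]
    · by_cases h2 : i ∈ S.erase s
      · simp only [vv, if_neg h1, if_pos h2, neg_sq, zero_add]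
      · simp only [vv, if_neg h1, if_neg h2, add_zero]
        norm_num
  rw [Finset.sum_congr rfl (fun i _ => hsplit i), Finset.sum_add_distrib]
  rw [Finset.sum_ite_eq' Finset.univ s (fun _ => A^2), if_pos (Finset.mem_univ s)]
  rw [Finset.sum_ite_mem, Finset.univ_inter]
  have hB : ∑ i ∈ S.erase s, (ee θ i s)^2 ≤ (S.card : ℝ) - 1 := by
    calc ∑ i ∈ S.erase s, (ee θ i s)^2 ≤ ∑ _i ∈ S.erase s, (1:ℝ) :=
        Finset.sum_le_sum (fun i _ => by
          have h1 := ee_nonneg θ i s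
          have h2 := ee_le_one θ i s
          nlinarith)
    _ = ((S.erase s).card : ℝ) := by simp
    _ = (S.card : ℝ) - 1 := hcast
  nlinarith [hA0, hA1, hB]

noncomputable def Xvv (S : Finset (Fin d)) {m : ℕ} (P : Fin m → ℕ) (μ : Fin m → ℝ)
    (σ : Ranking S) (i : Fin d) : ℝ :=
  ∑ a, μ a * Xv1 θ S (P a) σ i

end VVProps

section LemmaW
variable {d : ℕ}

lemma Xvv_cons_ge2 (θ : Fin d → ℝ) {S : Finset (Fin d)} (s : {x // x ∈ S})
    (σ' : Ranking (S.erase s.1)) {m : ℕ} (P : Fin m → ℕ) (μ : Fin m → ℝ)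
    (hP : ∀ a, 2 ≤ P a) (i : Fin d) :
    Xvv θ S P μ (consRank s σ') i = Xvv θ (S.erase s.1) (fun a => P a - 1) μ σ' i := by
  unfold Xvv
  exact Finset.sum_congr rfl (fun a _ => by rw [Xv1_consRank_ge2 θ s σ' (P a) (hP a) i])

lemma Xvv_cons_one (θ : Fin d → ℝ) {S : Finset (Fin d)} (s : {x // x ∈ S})
    (σ' : Ranking (S.erase s.1)) {m : ℕ} (P : Fin (m+1) → ℕ) (μ : Fin (m+1) → ℝ)
    (hP0 : P 0 = 1) (hP : ∀ a : Fin m, 2 ≤ P a.succ) (i : Fin d) :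
    Xvv θ S P μ (consRank s σ') i =
      μ 0 * vv θ S s.1 i +
        Xvv θ (S.erase s.1) (fun a : Fin m => P a.succ - 1) (fun a => μ a.succ) σ' i := by
  unfold Xvv
  rw [Fin.sum_univ_succ]
  congr 1
  · rw [hP0, Xv1_consRank_one θ s σ' i]
  · exact Finset.sum_congr rfl (fun a _ => by
      rw [Xv1_consRank_ge2 θ s σ' (P a.succ) (hP a) i])

lemma PLProb_nonneg (θ : Fin d → ℝ) (S : Finset (Fin d)) (σ : Ranking S) :
    0 ≤ PLProb θ S σ :=
  Finset.prod_nonneg fun a _ => div_nonneg (Real.exp_pos _).le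
    (Finset.sum_nonneg fun _ _ => (Real.exp_pos _).le)

lemma lemmaW (θ : Fin d → ℝ) (t : ℝ) (ht : 0 ≤ t) : ∀ (k : ℕ) (S : Finset (Fin d)),
    S.card = k → ∀ (m : ℕ) (P : Fin m → ℕ) (μ : Fin m → ℝ), (∀ a, 0 ≤ μ a) →
    (∀ a, 1 ≤ P a) → (∀ a, P a ≤ S.card - 1) → StrictMono P → ∀ (x : Fin d → ℝ),
    (∑ σ : Ranking S, PLProb θ S σ *
        Real.cosh (t * Real.sqrt (∑ i, (x i + Xvv θ S P μ σ i)^2))) ≤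
      Real.cosh (t * Real.sqrt (∑ i, (x i)^2)) *
        Real.exp (t^2/2 * ∑ a, (μ a)^2 * ((S.card : ℝ) - (P a : ℝ)) *
          ((S.card : ℝ) - (P a : ℝ) + 1)) := by
  intro k
  induction k using Nat.strong_induction_on with
  | _ k ih =>
    intro S hS m P μ hμ hP1 hP2 hPmono x
    cases m with
    | zero =>
      have h1 : ∀ σ : Ranking S, PLProb θ S σ *
          Real.cosh (t * Real.sqrt (∑ i, (x i + Xvv θ S P μ σ i)^2)) =
          PLProb θ S σ * Real.cosh (t * Real.sqrt (∑ i, (x i)^2)) := by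
        intro σ
        have hX : ∀ i : Fin d, Xvv θ S P μ σ i = 0 := by
          intro i; unfold Xvv; simp
        simp only [hX, add_zero]
      rw [Finset.sum_congr rfl (fun σ _ => h1 σ), ← Finset.sum_mul,
        sum_PLProb_eq_one θ S.card S rfl]
      simp
    | succ m' =>
      have hk2 : 2 ≤ S.card := by have h1 := hP1 0; have h2 := hP2 0; omega
      have hpos : 0 < S.card := by omega
      have hkk : 2 ≤ k := by omega
      have hSne : S.Nonempty := Finset.card_pos.1 hpos
      have hZpos : 0 < ∑ x0 ∈ S, Real.exp (θ x0) :=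
        Finset.sum_pos (fun x0 _ => Real.exp_pos _) hSne
      have hq0 : ∀ s : {x // x ∈ S}, 0 ≤ Real.exp (θ s.1) / ∑ x0 ∈ S, Real.exp (θ x0) :=
        fun s => div_nonneg (Real.exp_pos _).le hZpos.le
      have hq1 : ∑ s ∈ S.attach, Real.exp (θ s.1) / ∑ x0 ∈ S, Real.exp (θ x0) = 1 :=
        sum_q_eq_one θ hSne
      have hcard_er : ∀ s : {x // x ∈ S}, (S.erase s.1).card = k - 1 := by
        intro s; rw [Finset.card_erase_of_mem s.2, hS]
      have hklt : k - 1 < k := by omega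
      rw [sum_ranking_eq hpos]
      by_cases hP0 : P 0 = 1
      · -- separator at the top of the ranking
        have hPsucc : ∀ a : Fin m', 2 ≤ P a.succ := by
          intro a
          have h1 := hPmono (Fin.succ_pos a)
          omega
        set c : ℝ := μ 0 * Real.sqrt (((S.card : ℝ) - 1) * (S.card : ℝ)) with hc_def
        have hc : 0 ≤ c := mul_nonneg (hμ 0) (Real.sqrt_nonneg _)
        have step1 : ∀ (s : {x // x ∈ S}) (σ' : Ranking (S.erase s.1)),
            PLProb θ S (consRank s σ') *
              Real.cosh (t * Real.sqrt (∑ i, (x i + Xvv θ S P μ (consRank s σ') i)^2)) =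
            (Real.exp (θ s.1) / ∑ x0 ∈ S, Real.exp (θ x0)) *
              (PLProb θ (S.erase s.1) σ' *
                Real.cosh (t * Real.sqrt (∑ i, ((x i + μ 0 * vv θ S s.1 i) +
                  Xvv θ (S.erase s.1) (fun a : Fin m' => P a.succ - 1)
                    (fun a => μ a.succ) σ' i)^2))) := by
          intro s σ'
          have hA : (∑ i, (x i + Xvv θ S P μ (consRank s σ') i)^2) =
              ∑ i, ((x i + μ 0 * vv θ S s.1 i) +
                Xvv θ (S.erase s.1) (fun a : Fin m' => P a.succ - 1)
                  (fun a => μ a.succ) σ' i)^2 :=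
            Finset.sum_congr rfl (fun i _ => by
              rw [Xvv_cons_one θ s σ' P μ hP0 hPsucc i]; ring)
          rw [PLProb_consRank θ s σ', hA]
          ring
        have step2 : ∀ s : {x // x ∈ S},
            (∑ σ' : Ranking (S.erase s.1), PLProb θ (S.erase s.1) σ' *
              Real.cosh (t * Real.sqrt (∑ i, ((x i + μ 0 * vv θ S s.1 i) +
                Xvv θ (S.erase s.1) (fun a : Fin m' => P a.succ - 1)
                  (fun a => μ a.succ) σ' i)^2))) ≤
            Real.cosh (t * Real.sqrt (∑ i, (x i + μ 0 * vv θ S s.1 i)^2)) *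
              Real.exp (t^2/2 * ∑ a : Fin m', (μ a.succ)^2 *
                (((k-1 : ℕ) : ℝ) - ((P a.succ - 1 : ℕ) : ℝ)) *
                (((k-1 : ℕ) : ℝ) - ((P a.succ - 1 : ℕ) : ℝ) + 1)) := by
          intro s
          have hcast : ((S.erase s.1).card : ℝ) = ((k-1 : ℕ) : ℝ) := by rw [hcard_er s]
          have hmain := ih (k-1) hklt (S.erase s.1) (hcard_er s) m'
            (fun a : Fin m' => P a.succ - 1) (fun a => μ a.succ)
            (fun a => hμ a.succ)
            (fun a => by show 1 ≤ P a.succ - 1; have := hPsucc a; omega)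
            (fun a => by
              show P a.succ - 1 ≤ (S.erase s.1).card - 1
              have h1 := hP2 a.succ
              have h2 := hPsucc a
              have h3 := hcard_er s
              rw [hS] at h1
              omega)
            (fun a b hab => by
              show P a.succ - 1 < P b.succ - 1
              have h1 := hPmono (Fin.succ_lt_succ_iff.2 hab)
              have h2 := hPsucc a
              omega)
            (fun i => x i + μ 0 * vv θ S s.1 i)
          rw [hcast] at hmain
          exact hmain
        calc ∑ s ∈ S.attach, ∑ σ' : Ranking (S.erase s.1),
              PLProb θ S (consRank s σ') *
                Real.cosh (t * Real.sqrt (∑ i, (x i + Xvv θ S P μ (consRank s σ') i)^2))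
            = ∑ s ∈ S.attach, (Real.exp (θ s.1) / ∑ x0 ∈ S, Real.exp (θ x0)) *
                ∑ σ' : Ranking (S.erase s.1), PLProb θ (S.erase s.1) σ' *
                  Real.cosh (t * Real.sqrt (∑ i, ((x i + μ 0 * vv θ S s.1 i) +
                    Xvv θ (S.erase s.1) (fun a : Fin m' => P a.succ - 1)
                      (fun a => μ a.succ) σ' i)^2)) := by
              apply Finset.sum_congr rfl
              intro s _
              rw [Finset.mul_sum]
              exact Finset.sum_congr rfl (fun σ' _ => step1 s σ')
          _ ≤ ∑ s ∈ S.attach, (Real.exp (θ s.1) / ∑ x0 ∈ S, Real.exp (θ x0)) *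
                (Real.cosh (t * Real.sqrt (∑ i, (x i + μ 0 * vv θ S s.1 i)^2)) *
                  Real.exp (t^2/2 * ∑ a : Fin m', (μ a.succ)^2 *
                    (((k-1 : ℕ) : ℝ) - ((P a.succ - 1 : ℕ) : ℝ)) *
                    (((k-1 : ℕ) : ℝ) - ((P a.succ - 1 : ℕ) : ℝ) + 1))) := by
              apply Finset.sum_le_sum
              intro s _
              exact mul_le_mul_of_nonneg_left (step2 s) (hq0 s)
          _ = (∑ s ∈ S.attach, (Real.exp (θ s.1) / ∑ x0 ∈ S, Real.exp (θ x0)) *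
                  Real.cosh (t * Real.sqrt (∑ i, (x i + μ 0 * vv θ S s.1 i)^2))) *
                Real.exp (t^2/2 * ∑ a : Fin m', (μ a.succ)^2 *
                  (((k-1 : ℕ) : ℝ) - ((P a.succ - 1 : ℕ) : ℝ)) *
                  (((k-1 : ℕ) : ℝ) - ((P a.succ - 1 : ℕ) : ℝ) + 1)) := by
              rw [Finset.sum_mul]
              exact Finset.sum_congr rfl (fun s _ => by ring)
          _ ≤ (Real.cosh (t * Real.sqrt (∑ i, (x i)^2)) * Real.exp (t^2 * c^2 / 2)) *
                Real.exp (t^2/2 * ∑ a : Fin m', (μ a.succ)^2 *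
                  (((k-1 : ℕ) : ℝ) - ((P a.succ - 1 : ℕ) : ℝ)) *
                  (((k-1 : ℕ) : ℝ) - ((P a.succ - 1 : ℕ) : ℝ) + 1)) := by
              apply mul_le_mul_of_nonneg_right _ (Real.exp_nonneg _)
              apply aux_pinelis S.attach
                (fun s => Real.exp (θ s.1) / ∑ x0 ∈ S, Real.exp (θ x0))
                (fun s i => μ 0 * vv θ S s.1 i) x c t
                (fun s _ => hq0 s) hq1 ?_ hc ht ?_
              · intro i
                have h0 := vv_mean_zero θ hSne i
                calc ∑ s ∈ S.attach, (Real.exp (θ s.1) / ∑ x0 ∈ S, Real.exp (θ x0)) *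
                      (μ 0 * vv θ S s.1 i)
                    = μ 0 * ∑ s ∈ S.attach,
                        (Real.exp (θ s.1) / ∑ x0 ∈ S, Real.exp (θ x0)) * vv θ S s.1 i := by
                      rw [Finset.mul_sum]
                      exact Finset.sum_congr rfl (fun s _ => by ring)
                  _ = 0 := by rw [h0, mul_zero]
              · intro s _
                have h1 : ∑ i, (μ 0 * vv θ S s.1 i)^2 = (μ 0)^2 * ∑ i, (vv θ S s.1 i)^2 := by
                  rw [Finset.mul_sum]
                  exact Finset.sum_congr rfl (fun i _ => by ring)
                rw [h1, hc_def]
                rw [Real.sqrt_mul (sq_nonneg _), Real.sqrt_sq (hμ 0)]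
                apply mul_le_mul_of_nonneg_left _ (hμ 0)
                exact Real.sqrt_le_sqrt (vv_norm_sq_le θ s.1 s.2)
          _ = Real.cosh (t * Real.sqrt (∑ i, (x i)^2)) *
                Real.exp (t^2/2 * ∑ a, (μ a)^2 * ((S.card : ℝ) - (P a : ℝ)) *
                  ((S.card : ℝ) - (P a : ℝ) + 1)) := by
              have h0 : (0:ℝ) ≤ ((S.card:ℝ) - 1) * (S.card:ℝ) := by
                have h2 : (2:ℝ) ≤ (S.card:ℝ) := by exact_mod_cast hk2
                nlinarith
              have hcsq : c^2 = (μ 0)^2 * (((S.card : ℝ) - 1) * (S.card : ℝ)) := by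
                rw [hc_def, mul_pow, Real.sq_sqrt h0]
              have hterm0 : t^2 * c^2 / 2 =
                  t^2/2 * ((μ 0)^2 * ((S.card : ℝ) - (P 0 : ℝ)) *
                    ((S.card : ℝ) - (P 0 : ℝ) + 1)) := by
                rw [hcsq, hP0]
                push_cast
                ring
              have htrest : ∀ a : Fin m',
                  (μ a.succ)^2 * (((k-1 : ℕ) : ℝ) - ((P a.succ - 1 : ℕ) : ℝ)) *
                    (((k-1 : ℕ) : ℝ) - ((P a.succ - 1 : ℕ) : ℝ) + 1) =
                  (μ a.succ)^2 * ((S.card : ℝ) - (P a.succ : ℝ)) *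
                    ((S.card : ℝ) - (P a.succ : ℝ) + 1) := by
                intro a
                have h2 := hPsucc a
                have hc1 : ((k-1 : ℕ) : ℝ) = (k : ℝ) - 1 := by
                  push_cast [Nat.cast_sub (by omega : 1 ≤ k)]
                  ring
                have hc2 : ((P a.succ - 1 : ℕ) : ℝ) = (P a.succ : ℝ) - 1 := by
                  push_cast [Nat.cast_sub (by omega : 1 ≤ P a.succ)]
                  ring
                rw [hc1, hc2, hS]
                ring
              have hsplit : (∑ a, (μ a)^2 * ((S.card : ℝ) - (P a : ℝ)) *
                    ((S.card : ℝ) - (P a : ℝ) + 1)) =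
                  (μ 0)^2 * ((S.card : ℝ) - (P 0 : ℝ)) * ((S.card : ℝ) - (P 0 : ℝ) + 1) +
                  ∑ a : Fin m', (μ a.succ)^2 *
                    (((k-1 : ℕ) : ℝ) - ((P a.succ - 1 : ℕ) : ℝ)) *
                    (((k-1 : ℕ) : ℝ) - ((P a.succ - 1 : ℕ) : ℝ) + 1) := by
                rw [Fin.sum_univ_succ]
                congr 1
                exact Finset.sum_congr rfl (fun a _ => (htrest a).symm)
              rw [hsplit, mul_add, Real.exp_add, hterm0]
              ring
      · -- all separators strictly below the top
        have hP0' : ∀ a, 2 ≤ P a := by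
          intro a
          rcases eq_or_ne a 0 with rfl | ha
          · have := hP1 0; omega
          · have h1 := hPmono (Fin.pos_of_ne_zero ha)
            have h2 := hP1 0
            omega
        have step1 : ∀ (s : {x // x ∈ S}) (σ' : Ranking (S.erase s.1)),
            PLProb θ S (consRank s σ') *
              Real.cosh (t * Real.sqrt (∑ i, (x i + Xvv θ S P μ (consRank s σ') i)^2)) =
            (Real.exp (θ s.1) / ∑ x0 ∈ S, Real.exp (θ x0)) *
              (PLProb θ (S.erase s.1) σ' *
                Real.cosh (t * Real.sqrt (∑ i, (x i +
                  Xvv θ (S.erase s.1) (fun a => P a - 1) μ σ' i)^2))) := by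
          intro s σ'
          have hA : (∑ i, (x i + Xvv θ S P μ (consRank s σ') i)^2) =
              ∑ i, (x i + Xvv θ (S.erase s.1) (fun a => P a - 1) μ σ' i)^2 :=
            Finset.sum_congr rfl (fun i _ => by rw [Xvv_cons_ge2 θ s σ' P μ hP0' i])
          rw [PLProb_consRank θ s σ', hA]
          ring
        have step2 : ∀ s : {x // x ∈ S},
            (∑ σ' : Ranking (S.erase s.1), PLProb θ (S.erase s.1) σ' *
              Real.cosh (t * Real.sqrt (∑ i, (x i +
                Xvv θ (S.erase s.1) (fun a => P a - 1) μ σ' i)^2))) ≤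
            Real.cosh (t * Real.sqrt (∑ i, (x i)^2)) *
              Real.exp (t^2/2 * ∑ a, (μ a)^2 *
                (((k-1 : ℕ) : ℝ) - ((P a - 1 : ℕ) : ℝ)) *
                (((k-1 : ℕ) : ℝ) - ((P a - 1 : ℕ) : ℝ) + 1)) := by
          intro s
          have hcast : ((S.erase s.1).card : ℝ) = ((k-1 : ℕ) : ℝ) := by rw [hcard_er s]
          have hmain := ih (k-1) hklt (S.erase s.1) (hcard_er s) (m' + 1)
            (fun a => P a - 1) μ hμ
            (fun a => by show 1 ≤ P a - 1; have := hP0' a; omega)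
            (fun a => by
              show P a - 1 ≤ (S.erase s.1).card - 1
              have h1 := hP2 a
              have h2 := hP0' a
              have h3 := hcard_er s
              rw [hS] at h1
              omega)
            (fun a b hab => by
              show P a - 1 < P b - 1
              have h1 := hPmono hab
              have h2 := hP0' a
              omega)
            x
          rw [hcast] at hmain
          exact hmain
        calc ∑ s ∈ S.attach, ∑ σ' : Ranking (S.erase s.1),
              PLProb θ S (consRank s σ') *
                Real.cosh (t * Real.sqrt (∑ i, (x i + Xvv θ S P μ (consRank s σ') i)^2))
            = ∑ s ∈ S.attach, (Real.exp (θ s.1) / ∑ x0 ∈ S, Real.exp (θ x0)) *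
                ∑ σ' : Ranking (S.erase s.1), PLProb θ (S.erase s.1) σ' *
                  Real.cosh (t * Real.sqrt (∑ i, (x i +
                    Xvv θ (S.erase s.1) (fun a => P a - 1) μ σ' i)^2)) := by
              apply Finset.sum_congr rfl
              intro s _
              rw [Finset.mul_sum]
              exact Finset.sum_congr rfl (fun σ' _ => step1 s σ')
          _ ≤ ∑ s ∈ S.attach, (Real.exp (θ s.1) / ∑ x0 ∈ S, Real.exp (θ x0)) *
                (Real.cosh (t * Real.sqrt (∑ i, (x i)^2)) *
                  Real.exp (t^2/2 * ∑ a, (μ a)^2 *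
                    (((k-1 : ℕ) : ℝ) - ((P a - 1 : ℕ) : ℝ)) *
                    (((k-1 : ℕ) : ℝ) - ((P a - 1 : ℕ) : ℝ) + 1))) := by
              apply Finset.sum_le_sum
              intro s _
              exact mul_le_mul_of_nonneg_left (step2 s) (hq0 s)
          _ = Real.cosh (t * Real.sqrt (∑ i, (x i)^2)) *
                Real.exp (t^2/2 * ∑ a, (μ a)^2 * ((S.card : ℝ) - (P a : ℝ)) *
                  ((S.card : ℝ) - (P a : ℝ) + 1)) := by
              rw [← Finset.sum_mul, hq1, one_mul]
              have hsum : (∑ a, (μ a)^2 *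
                    (((k-1 : ℕ) : ℝ) - ((P a - 1 : ℕ) : ℝ)) *
                    (((k-1 : ℕ) : ℝ) - ((P a - 1 : ℕ) : ℝ) + 1)) =
                  ∑ a, (μ a)^2 * ((S.card : ℝ) - (P a : ℝ)) *
                    ((S.card : ℝ) - (P a : ℝ) + 1) := by
                apply Finset.sum_congr rfl
                intro a _
                have h2 := hP0' a
                have hc1 : ((k-1 : ℕ) : ℝ) = (k : ℝ) - 1 := by
                  push_cast [Nat.cast_sub (by omega : 1 ≤ k)]
                  ring
                have hc2 : ((P a - 1 : ℕ) : ℝ) = (P a : ℝ) - 1 := by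
                  push_cast [Nat.cast_sub (by omega : 1 ≤ P a)]
                  ring
                rw [hc1, hc2, hS]
                ring
              rw [hsum]

end LemmaW

section LemmaJ
variable {d n : ℕ}

lemma split_apply_self (S : Fin n → Finset (Fin d)) (j0 : Fin n) (ρ : Ranking (S j0))
    (τ : ∀ j : {j // j ≠ j0}, Ranking (S j.1)) :
    (Equiv.piSplitAt j0 (fun j => Ranking (S j))).symm (ρ, τ) j0 = ρ := by
  simp [Equiv.piSplitAt]

lemma split_apply_ne (S : Fin n → Finset (Fin d)) (j0 : Fin n) (ρ : Ranking (S j0))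
    (τ : ∀ j : {j // j ≠ j0}, Ranking (S j.1)) (j : Fin n) (hj : j ≠ j0) :
    (Equiv.piSplitAt j0 (fun j => Ranking (S j))).symm (ρ, τ) j = τ ⟨j, hj⟩ := by
  simp [Equiv.piSplitAt, hj]

lemma sum_prod_PL_eq_one (θ : Fin d → ℝ) (S : Fin n → Finset (Fin d)) :
    ∑ σ : (∀ j, Ranking (S j)), ∏ j, PLProb θ (S j) (σ j) = 1 := by
  classical
  rw [← Fintype.piFinset_univ, ← Finset.prod_univ_sum]
  apply Finset.prod_eq_one
  intro j _
  exact sum_PLProb_eq_one θ (S j).card (S j) rfl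

lemma prod_PL_split (θ : Fin d → ℝ) (S : Fin n → Finset (Fin d)) (j0 : Fin n)
    (ρ : Ranking (S j0)) (τ : ∀ j : {j // j ≠ j0}, Ranking (S j.1)) :
    (∏ j, PLProb θ (S j) ((Equiv.piSplitAt j0 (fun j => Ranking (S j))).symm (ρ, τ) j)) =
      PLProb θ (S j0) ρ *
        ∏ j' : {j // j ≠ j0}, PLProb θ (S j'.1) (τ j') := by
  classical
  rw [← Finset.mul_prod_erase Finset.univ _ (Finset.mem_univ j0)]
  congr 1
  · rw [split_apply_self]
  · calc ∏ x ∈ Finset.univ.erase j0,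
          PLProb θ (S x) ((Equiv.piSplitAt j0 (fun j => Ranking (S j))).symm (ρ, τ) x)
        = ∏ j' : {j // j ≠ j0},
            PLProb θ (S j'.1) ((Equiv.piSplitAt j0 (fun j => Ranking (S j))).symm (ρ, τ) j'.1) :=
          Finset.prod_subtype (Finset.univ.erase j0) (fun j => by simp [Finset.mem_erase]) _
      _ = ∏ j' : {j // j ≠ j0}, PLProb θ (S j'.1) (τ j') :=
          Finset.prod_congr rfl (fun j' _ => by rw [split_apply_ne S j0 ρ τ j'.1 j'.2])

lemma lemmaJ (θ : Fin d → ℝ) (t : ℝ) (ht : 0 ≤ t) (S : Fin n → Finset (Fin d))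
    (ℓ : Fin n → ℕ) (p : (j : Fin n) → Fin (ℓ j) → ℕ) (lam : (j : Fin n) → Fin (ℓ j) → ℝ)
    (hlam : ∀ j a, 0 ≤ lam j a) (hp1 : ∀ j a, 1 ≤ p j a)
    (hp2 : ∀ j a, p j a ≤ (S j).card - 1) (hmono : ∀ j, StrictMono (p j)) :
    ∀ (T : Finset (Fin n)) (x : Fin d → ℝ),
    (∑ σ : (∀ j, Ranking (S j)), (∏ j, PLProb θ (S j) (σ j)) *
        Real.cosh (t * Real.sqrt (∑ i, (x i +
          ∑ j ∈ T, Xvv θ (S j) (p j) (lam j) (σ j) i)^2))) ≤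
      Real.cosh (t * Real.sqrt (∑ i, (x i)^2)) *
        Real.exp (t^2/2 * ∑ j ∈ T, ∑ a, (lam j a)^2 *
          (((S j).card : ℝ) - (p j a : ℝ)) * (((S j).card : ℝ) - (p j a : ℝ) + 1)) := by
  intro T
  induction T using Finset.induction_on with
  | empty =>
    intro x
    simp only [Finset.sum_empty, add_zero, mul_zero, Real.exp_zero, mul_one]
    rw [← Finset.sum_mul, sum_prod_PL_eq_one θ S, one_mul]
  | @insert j0 T hj0 IH =>
    intro x
    classical
    have hdecomp : ∀ F : (∀ j, Ranking (S j)) → ℝ,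
        (∑ σ : (∀ j, Ranking (S j)), F σ) =
        ∑ ρ : Ranking (S j0), ∑ τ : (∀ j : {j // j ≠ j0}, Ranking (S j.1)),
          F ((Equiv.piSplitAt j0 (fun j => Ranking (S j))).symm (ρ, τ)) := by
      intro F
      rw [← Equiv.sum_comp (Equiv.piSplitAt j0 (fun j => Ranking (S j))).symm F,
        Fintype.sum_prod_type]
    set ρstar : Ranking (S j0) := (Finset.equivFin (S j0)).symm with hρstar
    set Y : (∀ j : {j // j ≠ j0}, Ranking (S j.1)) → Fin d → ℝ :=
      fun τ i => ∑ j ∈ T, Xvv θ (S j) (p j) (lam j)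
        ((Equiv.piSplitAt j0 (fun j => Ranking (S j))).symm (ρstar, τ) j) i with hY
    have hZ : ∀ (ρ : Ranking (S j0)) (τ : ∀ j : {j // j ≠ j0}, Ranking (S j.1)) (i : Fin d),
        (∑ j ∈ T, Xvv θ (S j) (p j) (lam j)
          ((Equiv.piSplitAt j0 (fun j => Ranking (S j))).symm (ρ, τ) j) i) = Y τ i := by
      intro ρ τ i
      apply Finset.sum_congr rfl
      intro j hj
      have hne : j ≠ j0 := fun h => hj0 (h ▸ hj)
      rw [split_apply_ne S j0 ρ τ j hne, split_apply_ne S j0 ρstar τ j hne]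
    set W : (∀ j : {j // j ≠ j0}, Ranking (S j.1)) → ℝ :=
      fun τ => ∏ j' : {j // j ≠ j0}, PLProb θ (S j'.1) (τ j') with hW
    have hW0 : ∀ τ, 0 ≤ W τ := fun τ => Finset.prod_nonneg (fun j' _ => PLProb_nonneg θ _ _)
    set E0 : ℝ := Real.exp (t^2/2 * ∑ a, (lam j0 a)^2 *
        (((S j0).card : ℝ) - (p j0 a : ℝ)) * (((S j0).card : ℝ) - (p j0 a : ℝ) + 1)) with hE0
    have hE0nn : 0 ≤ E0 := Real.exp_nonneg _
    have hinner : ∀ τ, (∑ ρ : Ranking (S j0), PLProb θ (S j0) ρ *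
        Real.cosh (t * Real.sqrt (∑ i, ((x i + Y τ i) +
          Xvv θ (S j0) (p j0) (lam j0) ρ i)^2))) ≤
        Real.cosh (t * Real.sqrt (∑ i, (x i + Y τ i)^2)) * E0 := by
      intro τ
      exact lemmaW θ t ht (S j0).card (S j0) rfl (ℓ j0) (p j0) (lam j0)
        (hlam j0) (hp1 j0) (hp2 j0) (hmono j0) (fun i => x i + Y τ i)
    have hLHS : (∑ σ : (∀ j, Ranking (S j)), (∏ j, PLProb θ (S j) (σ j)) *
        Real.cosh (t * Real.sqrt (∑ i, (x i +
          ∑ j ∈ insert j0 T, Xvv θ (S j) (p j) (lam j) (σ j) i)^2))) =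
        ∑ τ : (∀ j : {j // j ≠ j0}, Ranking (S j.1)), W τ *
          ∑ ρ : Ranking (S j0), PLProb θ (S j0) ρ *
            Real.cosh (t * Real.sqrt (∑ i, ((x i + Y τ i) +
              Xvv θ (S j0) (p j0) (lam j0) ρ i)^2)) := by
      rw [hdecomp (fun σ => (∏ j, PLProb θ (S j) (σ j)) *
        Real.cosh (t * Real.sqrt (∑ i, (x i +
          ∑ j ∈ insert j0 T, Xvv θ (S j) (p j) (lam j) (σ j) i)^2)))]
      rw [Finset.sum_comm]
      apply Finset.sum_congr rfl
      intro τ _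
      rw [Finset.mul_sum]
      apply Finset.sum_congr rfl
      intro ρ _
      have harg2 : (∑ i, (x i + ∑ j ∈ insert j0 T, Xvv θ (S j) (p j) (lam j)
            ((Equiv.piSplitAt j0 (fun j => Ranking (S j))).symm (ρ, τ) j) i)^2)
          = ∑ i, ((x i + Y τ i) + Xvv θ (S j0) (p j0) (lam j0) ρ i)^2 := by
        apply Finset.sum_congr rfl
        intro i _
        rw [Finset.sum_insert hj0, split_apply_self, hZ ρ τ i]
        ring
      rw [prod_PL_split θ S j0 ρ τ, harg2]
      ring
    have hT : (∑ σ : (∀ j, Ranking (S j)), (∏ j, PLProb θ (S j) (σ j)) *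
        Real.cosh (t * Real.sqrt (∑ i, (x i +
          ∑ j ∈ T, Xvv θ (S j) (p j) (lam j) (σ j) i)^2))) =
        ∑ τ : (∀ j : {j // j ≠ j0}, Ranking (S j.1)), W τ *
          Real.cosh (t * Real.sqrt (∑ i, (x i + Y τ i)^2)) := by
      rw [hdecomp (fun σ => (∏ j, PLProb θ (S j) (σ j)) *
        Real.cosh (t * Real.sqrt (∑ i, (x i +
          ∑ j ∈ T, Xvv θ (S j) (p j) (lam j) (σ j) i)^2)))]
      rw [Finset.sum_comm]
      apply Finset.sum_congr rfl
      intro τ _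
      have hstep : ∀ ρ : Ranking (S j0),
          (∏ j, PLProb θ (S j) ((Equiv.piSplitAt j0 (fun j => Ranking (S j))).symm (ρ, τ) j)) *
            Real.cosh (t * Real.sqrt (∑ i, (x i +
              ∑ j ∈ T, Xvv θ (S j) (p j) (lam j)
                ((Equiv.piSplitAt j0 (fun j => Ranking (S j))).symm (ρ, τ) j) i)^2)) =
          PLProb θ (S j0) ρ *
            (W τ * Real.cosh (t * Real.sqrt (∑ i, (x i + Y τ i)^2))) := by
        intro ρ
        have harg2 : (∑ i, (x i + ∑ j ∈ T, Xvv θ (S j) (p j) (lam j)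
              ((Equiv.piSplitAt j0 (fun j => Ranking (S j))).symm (ρ, τ) j) i)^2)
            = ∑ i, (x i + Y τ i)^2 :=
          Finset.sum_congr rfl (fun i _ => by rw [hZ ρ τ i])
        rw [prod_PL_split θ S j0 ρ τ, harg2]
        ring
      rw [Finset.sum_congr rfl (fun ρ _ => hstep ρ), ← Finset.sum_mul,
        sum_PLProb_eq_one θ (S j0).card (S j0) rfl, one_mul]
    calc (∑ σ : (∀ j, Ranking (S j)), (∏ j, PLProb θ (S j) (σ j)) *
          Real.cosh (t * Real.sqrt (∑ i, (x i +
            ∑ j ∈ insert j0 T, Xvv θ (S j) (p j) (lam j) (σ j) i)^2)))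
        = ∑ τ : (∀ j : {j // j ≠ j0}, Ranking (S j.1)), W τ *
            ∑ ρ : Ranking (S j0), PLProb θ (S j0) ρ *
              Real.cosh (t * Real.sqrt (∑ i, ((x i + Y τ i) +
                Xvv θ (S j0) (p j0) (lam j0) ρ i)^2)) := hLHS
      _ ≤ ∑ τ : (∀ j : {j // j ≠ j0}, Ranking (S j.1)), W τ *
            (Real.cosh (t * Real.sqrt (∑ i, (x i + Y τ i)^2)) * E0) :=
          Finset.sum_le_sum (fun τ _ => mul_le_mul_of_nonneg_left (hinner τ) (hW0 τ))
      _ = (∑ τ : (∀ j : {j // j ≠ j0}, Ranking (S j.1)), W τ *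
            Real.cosh (t * Real.sqrt (∑ i, (x i + Y τ i)^2))) * E0 := by
          rw [Finset.sum_mul]
          exact Finset.sum_congr rfl (fun τ _ => by ring)
      _ ≤ (Real.cosh (t * Real.sqrt (∑ i, (x i)^2)) *
            Real.exp (t^2/2 * ∑ j ∈ T, ∑ a, (lam j a)^2 *
              (((S j).card : ℝ) - (p j a : ℝ)) * (((S j).card : ℝ) - (p j a : ℝ) + 1))) * E0 := by
          apply mul_le_mul_of_nonneg_right _ hE0nn
          have hIH := IH x
          rw [hT] at hIH
          exact hIH
      _ = Real.cosh (t * Real.sqrt (∑ i, (x i)^2)) *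
            Real.exp (t^2/2 * ∑ j ∈ insert j0 T, ∑ a, (lam j a)^2 *
              (((S j).card : ℝ) - (p j a : ℝ)) * (((S j).card : ℝ) - (p j a : ℝ) + 1)) := by
          rw [Finset.sum_insert hj0, mul_add, Real.exp_add, hE0]
          ring

end LemmaJ

theorem statement_8
    (d n : ℕ) (hd : 2 ≤ d) (b : ℝ)
    (θstar : Fin d → ℝ) (hθ : OmegaB b θstar)
    (S : Fin n → Finset (Fin d)) (hS : ∀ j, 2 ≤ (S j).card)
    (ℓ : Fin n → ℕ) (hℓ : ∀ j, 1 ≤ ℓ j)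
    (p : (j : Fin n) → Fin (ℓ j) → ℕ)
    (hpmono : ∀ j, StrictMono (p j))
    (hprange : ∀ j a, 1 ≤ p j a ∧ p j a ≤ (S j).card - 1)
    (lam : (j : Fin n) → Fin (ℓ j) → ℝ) (hlam : ∀ j a, 0 ≤ lam j a) :
    1 - 2 * Real.exp 3 / (d : ℝ) ^ 3 ≤
      jointProb θstar S (fun σ =>
        l2norm (gradLRB S ℓ p lam θstar σ) ≤
          Real.sqrt (6 * Real.log d *
            ∑ j, ∑ a, (lam j a) ^ 2 * (((S j).card : ℝ) - (p j a : ℕ)) *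
              (((S j).card : ℝ) - (p j a : ℕ) + 1))) := by
  classical
  have hp1 : ∀ j a, 1 ≤ p j a := fun j a => (hprange j a).1
  have hp2 : ∀ j a, p j a ≤ (S j).card - 1 := fun j a => (hprange j a).2
  have hcp : ∀ j a, (1:ℝ) ≤ ((S j).card : ℝ) - (p j a : ℝ) := by
    intro j a
    have h1 := hp2 j a
    have h2 := hS j
    have h3 : p j a + 1 ≤ (S j).card := by omega
    have h4 : ((p j a : ℝ) + 1) ≤ ((S j).card : ℝ) := by exact_mod_cast h3
    linarith
  set V : ℝ := ∑ j, ∑ a, (lam j a) ^ 2 * (((S j).card : ℝ) - (p j a : ℕ)) *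
      (((S j).card : ℝ) - (p j a : ℕ) + 1) with hV
  have hVnn : 0 ≤ V := by
    rw [hV]
    apply Finset.sum_nonneg
    intro j _
    apply Finset.sum_nonneg
    intro a _
    have h4 := hcp j a
    have h5 : (0:ℝ) ≤ ((S j).card : ℝ) - (p j a : ℕ) := by linarith
    have h6 : (0:ℝ) ≤ ((S j).card : ℝ) - (p j a : ℕ) + 1 := by linarith
    exact mul_nonneg (mul_nonneg (sq_nonneg _) h5) h6
  have hd1 : (1:ℝ) < (d:ℝ) := by
    have : (2:ℝ) ≤ (d:ℝ) := by exact_mod_cast hd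
    linarith
  have hlog : 0 < Real.log d := Real.log_pos hd1
  have hdpos : (0:ℝ) < (d : ℝ)^3 := by positivity
  have hFnn : ∀ σ : (∀ j, Ranking (S j)), 0 ≤ ∏ j, PLProb θstar (S j) (σ j) :=
    fun σ => Finset.prod_nonneg (fun j _ => PLProb_nonneg θstar (S j) (σ j))
  have htot : (∑ σ : (∀ j, Ranking (S j)), ∏ j, PLProb θstar (S j) (σ j)) = 1 :=
    sum_prod_PL_eq_one θstar S
  set A : ℝ := Real.sqrt (6 * Real.log d * V) with hA_def
  have hjoint : jointProb θstar S (fun σ =>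
      l2norm (gradLRB S ℓ p lam θstar σ) ≤ A) =
      ∑ σ : (∀ j, Ranking (S j)),
        (if l2norm (gradLRB S ℓ p lam θstar σ) ≤ A then ∏ j, PLProb θstar (S j) (σ j)
          else 0) := by
    simp only [jointProb]
  rw [hjoint]
  set B : ℝ := ∑ σ : (∀ j, Ranking (S j)),
      (if l2norm (gradLRB S ℓ p lam θstar σ) ≤ A then 0
        else ∏ j, PLProb θstar (S j) (σ j)) with hB_def
  have hBnn : 0 ≤ B := by
    rw [hB_def]
    apply Finset.sum_nonneg
    intro σ _
    by_cases h : l2norm (gradLRB S ℓ p lam θstar σ) ≤ A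
    · rw [if_pos h]
    · rw [if_neg h]; exact hFnn σ
  have hsum1 : (∑ σ : (∀ j, Ranking (S j)),
      (if l2norm (gradLRB S ℓ p lam θstar σ) ≤ A then ∏ j, PLProb θstar (S j) (σ j)
        else 0)) + B = 1 := by
    rw [hB_def, ← Finset.sum_add_distrib, ← htot]
    apply Finset.sum_congr rfl
    intro σ _
    by_cases h : l2norm (gradLRB S ℓ p lam θstar σ) ≤ A
    · rw [if_pos h, if_pos h, add_zero]
    · rw [if_neg h, if_neg h, zero_add]
  suffices hBle : B ≤ 2 * Real.exp 3 / (d : ℝ)^3 by linarith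
  -- two cases on V
  rcases eq_or_lt_of_le hVnn with hV0 | hVpos
  · -- V = 0 : the gradient vanishes identically, so B = 0
    have hterm0 : ∀ j a, (lam j a) ^ 2 * (((S j).card : ℝ) - (p j a : ℕ)) *
        (((S j).card : ℝ) - (p j a : ℕ) + 1) = 0 := by
      intro j a
      have houter : ∀ j0 ∈ Finset.univ, (0:ℝ) ≤ ∑ a0, (lam j0 a0) ^ 2 *
          (((S j0).card : ℝ) - (p j0 a0 : ℕ)) * (((S j0).card : ℝ) - (p j0 a0 : ℕ) + 1) := by
        intro j0 _
        apply Finset.sum_nonneg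
        intro a0 _
        have h4 := hcp j0 a0
        have h5 : (0:ℝ) ≤ ((S j0).card : ℝ) - (p j0 a0 : ℕ) := by linarith
        have h6 : (0:ℝ) ≤ ((S j0).card : ℝ) - (p j0 a0 : ℕ) + 1 := by linarith
        exact mul_nonneg (mul_nonneg (sq_nonneg _) h5) h6
      have h1 := (Finset.sum_eq_zero_iff_of_nonneg houter).1 hV0.symm j (Finset.mem_univ j)
      have hinner : ∀ a0 ∈ Finset.univ, (0:ℝ) ≤ (lam j a0) ^ 2 *
          (((S j).card : ℝ) - (p j a0 : ℕ)) * (((S j).card : ℝ) - (p j a0 : ℕ) + 1) := by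
        intro a0 _
        have h4 := hcp j a0
        have h5 : (0:ℝ) ≤ ((S j).card : ℝ) - (p j a0 : ℕ) := by linarith
        have h6 : (0:ℝ) ≤ ((S j).card : ℝ) - (p j a0 : ℕ) + 1 := by linarith
        exact mul_nonneg (mul_nonneg (sq_nonneg _) h5) h6
      exact (Finset.sum_eq_zero_iff_of_nonneg hinner).1 h1 a (Finset.mem_univ a)
    have hlam0 : ∀ j a, lam j a = 0 := by
      intro j a
      have h1 := hterm0 j a
      have h2 := hcp j a
      have h3 : (lam j a) ^ 2 = 0 := by
        by_contra hne
        have h4 : 0 < (lam j a)^2 := lt_of_le_of_ne (sq_nonneg _) (Ne.symm hne)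
        have h5 : 0 < ((S j).card : ℝ) - (p j a : ℕ) := by linarith
        have h6 : 0 < ((S j).card : ℝ) - (p j a : ℕ) + 1 := by linarith
        have h7 := mul_pos (mul_pos h4 h5) h6
        linarith
      exact pow_eq_zero_iff (by norm_num) |>.1 h3
    have hgrad0 : ∀ σ (i : Fin d), gradLRB S ℓ p lam θstar σ i = 0 := by
      intro σ i
      rw [gradLRB_eq_sum_Xv1]
      apply Finset.sum_eq_zero
      intro j _
      apply Finset.sum_eq_zero
      intro a _
      rw [hlam0 j a, zero_mul]
    have hEall : ∀ σ : (∀ j, Ranking (S j)),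
        l2norm (gradLRB S ℓ p lam θstar σ) ≤ A := by
      intro σ
      have h1 : l2norm (gradLRB S ℓ p lam θstar σ) = 0 := by
        unfold l2norm
        rw [Finset.sum_congr rfl (fun i _ => by rw [hgrad0 σ i])]
        simp
      rw [h1, hA_def]
      exact Real.sqrt_nonneg _
    have hB0 : B = 0 := by
      rw [hB_def]
      apply Finset.sum_eq_zero
      intro σ _
      rw [if_pos (hEall σ)]
    rw [hB0]
    positivity
  · -- V > 0
    have hprod : 0 < 6 * Real.log d * V := by positivity
    have hApos : 0 < A := Real.sqrt_pos.2 hprod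
    have hA2 : A^2 = 6 * Real.log d * V := Real.sq_sqrt hprod.le
    set tt : ℝ := A / V with htt_def
    have htt : 0 ≤ tt := div_nonneg hApos.le hVpos.le
    -- from lemmaJ with x = 0
    have hJ := lemmaJ θstar tt htt S ℓ p lam hlam hp1 hp2 hpmono Finset.univ (fun _ => 0)
    have hJ' : (∑ σ : (∀ j, Ranking (S j)), (∏ j, PLProb θstar (S j) (σ j)) *
        Real.cosh (tt * l2norm (gradLRB S ℓ p lam θstar σ))) ≤
        Real.exp (tt^2/2 * V) := by
      have hL : ∀ σ : (∀ j, Ranking (S j)),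
          Real.cosh (tt * Real.sqrt (∑ i, ((fun _ : Fin d => (0:ℝ)) i +
            ∑ j, Xvv θstar (S j) (p j) (lam j) (σ j) i)^2)) =
          Real.cosh (tt * l2norm (gradLRB S ℓ p lam θstar σ)) := by
        intro σ
        unfold l2norm
        have harg : (∑ i, ((fun _ : Fin d => (0:ℝ)) i +
            ∑ j, Xvv θstar (S j) (p j) (lam j) (σ j) i)^2) =
            ∑ i, (gradLRB S ℓ p lam θstar σ i)^2 := by
          apply Finset.sum_congr rfl
          intro i _
          have h1 : gradLRB S ℓ p lam θstar σ i =
              ∑ j, Xvv θstar (S j) (p j) (lam j) (σ j) i := by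
            rw [gradLRB_eq_sum_Xv1]
            rfl
          rw [h1, zero_add]
        rw [harg]
      have hR : Real.cosh (tt * Real.sqrt (∑ i, ((fun _ : Fin d => (0:ℝ)) i)^2)) = 1 := by
        simp
      calc (∑ σ : (∀ j, Ranking (S j)), (∏ j, PLProb θstar (S j) (σ j)) *
            Real.cosh (tt * l2norm (gradLRB S ℓ p lam θstar σ)))
          = ∑ σ : (∀ j, Ranking (S j)), (∏ j, PLProb θstar (S j) (σ j)) *
            Real.cosh (tt * Real.sqrt (∑ i, ((fun _ : Fin d => (0:ℝ)) i +
              ∑ j, Xvv θstar (S j) (p j) (lam j) (σ j) i)^2)) :=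
            Finset.sum_congr rfl (fun σ _ => by rw [hL σ])
        _ ≤ Real.cosh (tt * Real.sqrt (∑ i, ((fun _ : Fin d => (0:ℝ)) i)^2)) *
            Real.exp (tt^2/2 * ∑ j, ∑ a, (lam j a)^2 *
              (((S j).card : ℝ) - (p j a : ℝ)) * (((S j).card : ℝ) - (p j a : ℝ) + 1)) := hJ
        _ = Real.exp (tt^2/2 * V) := by rw [hR, one_mul, hV]
    have hcoshpos : 0 < Real.cosh (tt * A) := Real.cosh_pos _
    have hB1 : B * Real.cosh (tt * A) ≤ Real.exp (tt^2/2 * V) := by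
      rw [hB_def, Finset.sum_mul]
      refine le_trans (Finset.sum_le_sum ?_) hJ'
      intro σ _
      by_cases h : l2norm (gradLRB S ℓ p lam θstar σ) ≤ A
      · rw [if_pos h, zero_mul]
        exact mul_nonneg (hFnn σ) (Real.cosh_pos _).le
      · rw [if_neg h]
        apply mul_le_mul_of_nonneg_left _ (hFnn σ)
        apply Real.cosh_le_cosh.2
        have hl2nn : 0 ≤ l2norm (gradLRB S ℓ p lam θstar σ) := Real.sqrt_nonneg _
        rw [abs_of_nonneg (mul_nonneg htt hApos.le),
          abs_of_nonneg (mul_nonneg htt hl2nn)]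
        exact mul_le_mul_of_nonneg_left (le_of_lt (not_le.1 h)) htt
    have hcoshA : Real.exp (tt * A) / 2 ≤ Real.cosh (tt * A) := by
      rw [Real.cosh_eq]
      have := (Real.exp_pos (-(tt * A))).le
      linarith
    have hexppos : (0:ℝ) < Real.exp (tt * A) / 2 := by positivity
    have hB2 : B ≤ Real.exp (tt^2/2 * V) / Real.cosh (tt * A) :=
      (le_div_iff₀ hcoshpos).2 hB1
    have hB3 : Real.exp (tt^2/2 * V) / Real.cosh (tt * A) ≤
        Real.exp (tt^2/2 * V) / (Real.exp (tt * A) / 2) :=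
      div_le_div_of_nonneg_left (Real.exp_nonneg _) hexppos hcoshA
    have hB4 : Real.exp (tt^2/2 * V) / (Real.exp (tt * A) / 2) =
        2 * Real.exp (tt^2/2 * V - tt * A) := by
      rw [Real.exp_sub]
      field_simp
    have hexpcalc : tt^2/2 * V - tt * A = -(3 * Real.log d) := by
      have h1 : tt^2/2 * V - tt * A = -(A^2/(2*V)) := by
        rw [htt_def]
        field_simp
        ring
      have h2 : A^2/(2*V) = 3 * Real.log d := by
        rw [hA2]
        field_simp
        ring
      rw [h1, h2]
    have hfinal : 2 * Real.exp (tt^2/2 * V - tt * A) ≤ 2 * Real.exp 3 / (d : ℝ)^3 := by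
      rw [hexpcalc]
      have h1 : Real.exp (-(3 * Real.log d)) = ((d:ℝ)^3)⁻¹ := by
        rw [Real.exp_neg]
        congr 1
        rw [show (3:ℝ) * Real.log d = Real.log ((d:ℝ)^3) by
          rw [Real.log_pow]
          norm_num]
        exact Real.exp_log hdpos
      rw [h1]
      have h2 : (1:ℝ) ≤ Real.exp 3 := Real.one_le_exp (by norm_num)
      rw [div_eq_mul_inv]
      have h3 : (0:ℝ) ≤ ((d:ℝ)^3)⁻¹ := by positivity
      nlinarith
    linarith [hB2, hB3, hB4.le, hfinal, hB4.ge]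
end

section
/- Let (X_0, X_1, …, X_n) be a martingale taking values in ℝ^d with X_0 = 0 and ‖X_i − X_{i−1}‖₂ ≤ c_i almost surely for nonnegative constants c_i, 1 ≤ i ≤ n. Then for every δ > 0, P[‖X_n‖₂ ≥ δ] ≤ 2e³ exp(−δ²/(2 Σ_{i=1}^n c_i²)). -/
open MeasureTheory

section AuxAnalysis
open Real Set


lemma my_convexOn_sinh : ConvexOn ℝ (Set.Ici 0) Real.sinh := by
  refine convexOn_of_deriv2_nonneg (convex_Ici 0) Real.continuous_sinh.continuousOn
    Real.differentiable_sinh.differentiableOn ?_ ?_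
  · rw [Real.deriv_sinh]; exact Real.differentiable_cosh.differentiableOn
  · intro x hx
    rw [interior_Ici] at hx
    simp only [Function.iterate_succ, Function.iterate_zero, Function.comp_apply, id_eq]
    rw [Real.deriv_sinh, Real.deriv_cosh]
    exact (Real.sinh_pos_iff.2 hx).le

lemma my_sinh_slope {l s t : ℝ} (hl : 0 ≤ l) (hs : 0 < s) (hst : s ≤ t) :
    Real.sinh (l * s) / s ≤ Real.sinh (l * t) / t := by
  have ht : 0 < t := hs.trans_le hst
  rw [div_le_div_iff₀ hs ht]
  have key : Real.sinh (l * s) ≤ (s / t) * Real.sinh (l * t) := by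
    have h := my_convexOn_sinh.2 (Set.mem_Ici.2 (mul_nonneg hl ht.le))
      (show (0:ℝ) ∈ Set.Ici (0:ℝ) by simp)
      (show (0:ℝ) ≤ s / t by positivity)
      (show (0:ℝ) ≤ 1 - s / t by
        have : s / t ≤ 1 := (div_le_one ht).2 hst
        linarith)
      (by ring)
    simpa [Real.sinh_zero, smul_eq_mul,
      show s / t * (l * t) = l * s by field_simp] using h
  calc Real.sinh (l * s) * t ≤ (s / t) * Real.sinh (l * t) * t := by nlinarith
    _ = Real.sinh (l * t) * s := by field_simp

section
variable {l : ℝ}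


lemma my_hasDerivAt (hl : 0 ≤ l) {u : ℝ} (hu : 0 < u) :
    HasDerivAt (fun u => Real.cosh (l * Real.sqrt u))
      (Real.sinh (l * Real.sqrt u) * (l * (1 / (2 * Real.sqrt u)))) u := by
  have h1 : HasDerivAt (fun u : ℝ => Real.sqrt u) (1 / (2 * Real.sqrt u)) u :=
    Real.hasDerivAt_sqrt hu.ne'
  have h2 : HasDerivAt (fun u : ℝ => l * Real.sqrt u) (l * (1 / (2 * Real.sqrt u))) u :=
    h1.const_mul l
  exact (Real.hasDerivAt_cosh _).comp u h2

lemma my_convexOn_cosh_sqrt (hl : 0 ≤ l) :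
    ConvexOn ℝ (Set.Ici 0) (fun u => Real.cosh (l * Real.sqrt u)) := by
  have hderiv : ∀ u ∈ Set.Ioi (0:ℝ), deriv (fun u => Real.cosh (l * Real.sqrt u)) u
      = Real.sinh (l * Real.sqrt u) * (l * (1 / (2 * Real.sqrt u))) := fun u hu =>
    (my_hasDerivAt hl hu).deriv
  refine MonotoneOn.convexOn_of_deriv (convex_Ici 0)
    (Real.continuous_cosh.comp (continuous_const.mul Real.continuous_sqrt)).continuousOn
    ?_ ?_
  · rw [interior_Ici]
    exact fun u hu => ((my_hasDerivAt hl hu).differentiableAt).differentiableWithinAt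
  · rw [interior_Ici]
    intro a ha b hb hab
    rw [hderiv a ha, hderiv b hb]
    have hsa : 0 < Real.sqrt a := Real.sqrt_pos.2 ha
    have hsb : 0 < Real.sqrt b := Real.sqrt_pos.2 hb
    have hslope := my_sinh_slope hl hsa (Real.sqrt_le_sqrt hab)
    have h1 : Real.sinh (l * Real.sqrt a) * (l * (1 / (2 * Real.sqrt a)))
        = (l / 2) * (Real.sinh (l * Real.sqrt a) / Real.sqrt a) := by ring
    have h2 : Real.sinh (l * Real.sqrt b) * (l * (1 / (2 * Real.sqrt b)))
        = (l / 2) * (Real.sinh (l * Real.sqrt b) / Real.sqrt b) := by ring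
    rw [h1, h2]
    exact mul_le_mul_of_nonneg_left hslope (by positivity)

lemma my_chord {l r c t : ℝ} (hl : 0 ≤ l) (hr : 0 < r) (hc : 0 < c) (ht : |t| ≤ r * c) :
    Real.cosh (l * Real.sqrt (r^2 + c^2 + 2*t)) ≤
      Real.cosh (l*r) * Real.cosh (l*c) + t * (Real.sinh (l*r) * Real.sinh (l*c) / (r*c)) := by
  have hM : 0 < r * c := mul_pos hr hc
  have ht1 : -(r*c) ≤ t := neg_le_of_abs_le ht
  have ht2 : t ≤ r*c := le_of_abs_le ht
  have hx : ((r-c)^2 : ℝ) ∈ Set.Ici (0:ℝ) := Set.mem_Ici.2 (sq_nonneg _)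
  have hy : ((r+c)^2 : ℝ) ∈ Set.Ici (0:ℝ) := Set.mem_Ici.2 (sq_nonneg _)
  have ha : (0:ℝ) ≤ (r*c - t)/(2*(r*c)) := div_nonneg (by linarith) (by positivity)
  have hb : (0:ℝ) ≤ (r*c + t)/(2*(r*c)) := div_nonneg (by linarith) (by positivity)
  have hab : (r*c - t)/(2*(r*c)) + (r*c + t)/(2*(r*c)) = 1 := by
    rw [← add_div, div_eq_one_iff_eq (by positivity : (2*(r*c)) ≠ 0)]; ring
  have h := (my_convexOn_cosh_sqrt hl).2 hx hy ha hb hab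
  simp only [smul_eq_mul] at h
  have harg : (r*c - t)/(2*(r*c)) * ((r-c)^2) + (r*c + t)/(2*(r*c)) * ((r+c)^2)
      = r^2 + c^2 + 2*t := by
    rw [div_mul_eq_mul_div, div_mul_eq_mul_div, ← add_div,
      div_eq_iff (by positivity : (2*(r*c)) ≠ 0)]
    ring
  rw [harg] at h
  have hxval : Real.cosh (l * Real.sqrt ((r-c)^2)) = Real.cosh (l*(r-c)) := by
    rw [Real.sqrt_sq_eq_abs, ← Real.cosh_abs (l*(r-c)), abs_mul, abs_of_nonneg hl]
  have hyval : Real.cosh (l * Real.sqrt ((r+c)^2)) = Real.cosh (l*(r+c)) := by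
    rw [Real.sqrt_sq_eq_abs, ← Real.cosh_abs (l*(r+c)), abs_mul, abs_of_nonneg hl]
  rw [hxval, hyval] at h
  refine h.trans (le_of_eq ?_)
  have e1 : l*(r-c) = l*r - l*c := by ring
  have e2 : l*(r+c) = l*r + l*c := by ring
  rw [e1, e2, Real.cosh_sub, Real.cosh_add]
  field_simp
  ring
end



variable {F : Type*} [NormedAddCommGroup F] [InnerProductSpace ℝ F]

lemma my_pointwise {l c : ℝ} (hl : 0 ≤ l) (hc : 0 < c) (v w : F) (hw : ‖w‖ ≤ c) :
    Real.cosh (l * ‖v + w‖) ≤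
      Real.cosh (l * ‖v‖) * Real.cosh (l * c) +
        (inner ℝ v w : ℝ) *
          (if ‖v‖ = 0 then 0 else
            Real.sinh (l * ‖v‖) * Real.sinh (l * c) / (‖v‖ * c)) := by
  by_cases hr : ‖v‖ = 0
  · have hv : v = 0 := norm_eq_zero.1 hr
    subst hv
    simp only [norm_zero, hr, if_pos, inner_zero_left, zero_mul, add_zero, zero_add,
      mul_zero, Real.cosh_zero, one_mul]
    have h1 : l * ‖w‖ ≤ l * c := mul_le_mul_of_nonneg_left hw hl
    exact Real.cosh_le_cosh.2 (by
      rw [abs_of_nonneg (by positivity : (0:ℝ) ≤ l * ‖w‖),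
        abs_of_nonneg (by positivity : (0:ℝ) ≤ l * c)]
      exact h1)
  · have hrpos : 0 < ‖v‖ := lt_of_le_of_ne (norm_nonneg v) (Ne.symm hr)
    rw [if_neg hr]
    set t : ℝ := inner ℝ v w with htdef
    have ht : |t| ≤ ‖v‖ * c := by
      refine (abs_real_inner_le_norm v w).trans ?_
      exact mul_le_mul_of_nonneg_left hw (norm_nonneg v)
    have hsq : ‖v + w‖^2 ≤ ‖v‖^2 + c^2 + 2*t := by
      rw [norm_add_sq_real]
      have : ‖w‖^2 ≤ c^2 := by nlinarith [norm_nonneg w]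
      linarith
    have hargnn : (0:ℝ) ≤ ‖v‖^2 + c^2 + 2*t := le_trans (sq_nonneg _) hsq
    have hnle : ‖v + w‖ ≤ Real.sqrt (‖v‖^2 + c^2 + 2*t) := by
      rw [show ‖v + w‖ = Real.sqrt (‖v + w‖^2) by rw [Real.sqrt_sq (norm_nonneg _)]]
      exact Real.sqrt_le_sqrt hsq
    have hcosh : Real.cosh (l * ‖v + w‖) ≤ Real.cosh (l * Real.sqrt (‖v‖^2 + c^2 + 2*t)) := by
      refine Real.cosh_le_cosh.2 ?_
      rw [abs_of_nonneg (by positivity : (0:ℝ) ≤ l * ‖v+w‖),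
        abs_of_nonneg (mul_nonneg hl (Real.sqrt_nonneg _))]
      exact mul_le_mul_of_nonneg_left hnle hl
    exact hcosh.trans (my_chord hl hrpos hc ht)
end AuxAnalysis

section AuxProb
open MeasureTheory Real


variable {Ω : Type*} {m0 : MeasurableSpace Ω} {μ : Measure Ω} [IsProbabilityMeasure μ]
  {d : ℕ} {ℱ : Filtration ℕ m0} {X : ℕ → Ω → EuclideanSpace ℝ (Fin d)}

lemma my_zero_int (hX : Martingale X ℱ μ) (k : ℕ)
    (f : Ω → ℝ) (hfm : StronglyMeasurable[ℱ k] f) (K : ℝ)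
    (hfb : ∀ᵐ ω ∂μ, ‖f ω‖ ≤ K) (j : Fin d) :
    ∫ ω, f ω * (X (k+1) ω j - X k ω j) ∂μ = 0 := by
  set wj : Ω → ℝ := fun ω => X (k+1) ω j - X k ω j with hwj_def
  have hXint : ∀ i, Integrable (X i) μ := fun i => hX.integrable i
  have hproj : ∀ i, Integrable (fun ω => X i ω j) μ := fun i =>
    (EuclideanSpace.proj j (𝕜 := ℝ)).integrable_comp (hXint i)
  have hwj_int : Integrable wj μ := (hproj (k+1)).sub (hproj k)
  have hcond : (0 : Ω → ℝ) =ᵐ[μ] μ[wj | ℱ k] := by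
    refine ae_eq_condExp_of_forall_setIntegral_eq (ℱ.le k) hwj_int
      (fun s _ _ => (integrable_zero _ _ _).integrableOn) (fun s hs hμs => ?_)
      (StronglyMeasurable.aestronglyMeasurable stronglyMeasurable_zero)
    have h1 : ∫ ω in s, wj ω ∂μ
        = (∫ ω in s, X (k+1) ω ∂μ) j - (∫ ω in s, X k ω ∂μ) j := by
      rw [integral_sub (hproj (k+1)).integrableOn (hproj k).integrableOn]
      congr 1
      · exact ((EuclideanSpace.proj j (𝕜 := ℝ)).integral_comp_comm
          (hXint (k+1)).integrableOn)
      · exact ((EuclideanSpace.proj j (𝕜 := ℝ)).integral_comp_comm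
          (hXint k).integrableOn)
    rw [h1, hX.setIntegral_eq (Nat.le_succ k) hs]
    simp
  have hmul := condExp_stronglyMeasurable_mul_of_bound (ℱ.le k) hfm hwj_int K hfb
  have hint : Integrable (f * wj) μ :=
    hwj_int.bdd_mul (hfm.mono (ℱ.le k)).aestronglyMeasurable hfb
  have h2 : ∫ ω, (f * wj) ω ∂μ = ∫ ω, (μ[f * wj | ℱ k]) ω ∂μ :=
    (integral_condExp (ℱ.le k)).symm
  rw [show (fun ω => f ω * (X (k+1) ω j - X k ω j)) = fun ω => (f * wj) ω from rfl, h2]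
  have h3 : μ[f * wj | ℱ k] =ᵐ[μ] 0 := by
    refine hmul.trans ?_
    filter_upwards [hcond] with ω hω
    simp [Pi.mul_apply, ← hω]
  rw [integral_congr_ae h3]
  simp



variable {Ω : Type*} {m0 : MeasurableSpace Ω} {μ : Measure Ω} [IsProbabilityMeasure μ]
  {d : ℕ} {ℱ : Filtration ℕ m0} {X : ℕ → Ω → EuclideanSpace ℝ (Fin d)}


lemma my_cosh_integrable (hX : Martingale X ℱ μ) (i : ℕ) (l R : ℝ)
    (hXb : ∀ᵐ ω ∂μ, ‖X i ω‖ ≤ R) (hl : 0 ≤ l) :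
    Integrable (fun ω => Real.cosh (l * ‖X i ω‖)) μ := by
  have hm : AEStronglyMeasurable (fun ω => Real.cosh (l * ‖X i ω‖)) μ :=
    Real.continuous_cosh.comp_aestronglyMeasurable
      ((((hX.stronglyAdapted i).mono (ℱ.le i)).aestronglyMeasurable.norm).const_mul l)
  refine (integrable_const (Real.cosh (l * R))).mono' hm ?_
  filter_upwards [hXb] with ω hω
  rw [Real.norm_eq_abs, abs_of_pos (Real.cosh_pos _)]
  refine Real.cosh_le_cosh.2 ?_
  rw [abs_of_nonneg (by positivity), abs_of_nonneg (mul_nonneg hl ((norm_nonneg _).trans hω))]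
  exact mul_le_mul_of_nonneg_left hω hl

lemma my_step (hX : Martingale X ℱ μ) (k : ℕ) {l cc R : ℝ}
    (hl : 0 ≤ l) (hcc : 0 < cc) (hR : 0 < R)
    (hw : ∀ᵐ ω ∂μ, ‖X (k+1) ω - X k ω‖ ≤ cc)
    (hXk : ∀ᵐ ω ∂μ, ‖X k ω‖ ≤ R) :
    ∫ ω, Real.cosh (l * ‖X (k+1) ω‖) ∂μ ≤
      Real.cosh (l * cc) * ∫ ω, Real.cosh (l * ‖X k ω‖) ∂μ := by
  classical
  set Ψ : Ω → ℝ := fun ω => if ‖X k ω‖ = 0 then 0 else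
    Real.sinh (l * ‖X k ω‖) * Real.sinh (l * cc) / (‖X k ω‖ * cc) with hΨdef
  set K : ℝ := Real.sinh (l * R) * Real.sinh (l * cc) / cc with hKdef
  have hK0 : 0 ≤ K := by
    apply div_nonneg _ hcc.le
    exact mul_nonneg (Real.sinh_nonneg_iff.2 (by positivity)) (Real.sinh_nonneg_iff.2 (by positivity))
  -- measurability of Ψ
  have hXkm : StronglyMeasurable[ℱ k] (X k) := hX.stronglyAdapted k
  have hnmS : StronglyMeasurable[ℱ k] (fun ω => ‖X k ω‖) := hXkm.norm
  have hs0 : MeasurableSet[ℱ k] {ω | ‖X k ω‖ = 0} :=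
    hnmS.measurable (measurableSet_singleton 0)
  have hΨm : StronglyMeasurable[ℱ k] Ψ := by
    have h1 : Measurable[ℱ k] (fun ω => ‖X k ω‖) := hnmS.measurable
    have h2 : Measurable[ℱ k] (fun ω =>
        Real.sinh (l * ‖X k ω‖) * Real.sinh (l * cc) / (‖X k ω‖ * cc)) :=
      ((Real.continuous_sinh.measurable.comp (h1.const_mul l)).mul_const
        (Real.sinh (l * cc))).div (h1.mul_const cc)
    exact (Measurable.ite hs0 measurable_const h2).stronglyMeasurable
  -- the coordinate functions
  have hfm : ∀ j : Fin d, StronglyMeasurable[ℱ k] (fun ω => Ψ ω * X k ω j) := by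
    intro j
    refine hΨm.mul ?_
    exact ((EuclideanSpace.proj j (𝕜 := ℝ)).continuous).comp_stronglyMeasurable hXkm
  -- bound on the coordinate functions
  have hfb : ∀ j : Fin d, ∀ᵐ ω ∂μ, ‖Ψ ω * X k ω j‖ ≤ K := by
    intro j
    filter_upwards [hXk] with ω hω
    rw [Real.norm_eq_abs, abs_mul]
    by_cases hr : ‖X k ω‖ = 0
    · simp [hΨdef, hr, hK0]
    · have hrpos : 0 < ‖X k ω‖ := lt_of_le_of_ne (norm_nonneg _) (Ne.symm hr)
      have hΨval : |Ψ ω| = Real.sinh (l * ‖X k ω‖) * Real.sinh (l * cc) / (‖X k ω‖ * cc) := by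
        rw [hΨdef]
        simp only [hr, if_false]
        rw [abs_of_nonneg]
        apply div_nonneg _ (by positivity)
        exact mul_nonneg (Real.sinh_nonneg_iff.2 (by positivity))
          (Real.sinh_nonneg_iff.2 (by positivity))
      have hcoord : |X k ω j| ≤ ‖X k ω‖ := by
        have := EuclideanSpace.norm_eq (X k ω)
        calc |X k ω j| = Real.sqrt (|X k ω j|^2) := by rw [Real.sqrt_sq_eq_abs, abs_abs]
          _ ≤ ‖X k ω‖ := by
              rw [this]
              apply Real.sqrt_le_sqrt
              exact Finset.single_le_sum (f := fun i => |X k ω i|^2)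
                (fun i _ => sq_nonneg _) (Finset.mem_univ j)
      calc |Ψ ω| * |X k ω j| ≤ |Ψ ω| * ‖X k ω‖ :=
            mul_le_mul_of_nonneg_left hcoord (abs_nonneg _)
        _ = Real.sinh (l * ‖X k ω‖) * Real.sinh (l * cc) / cc := by
            rw [hΨval]; field_simp
        _ ≤ K := by
            rw [hKdef]
            refine (div_le_div_iff_of_pos_right hcc).2 ?_
            refine mul_le_mul_of_nonneg_right ?_ (Real.sinh_nonneg_iff.2 (by positivity))
            exact Real.sinh_le_sinh.2 (mul_le_mul_of_nonneg_left hω hl)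
  -- zero integrals
  have hzero : ∀ j : Fin d, ∫ ω, (Ψ ω * X k ω j) * (X (k+1) ω j - X k ω j) ∂μ = 0 :=
    fun j => my_zero_int hX k _ (hfm j) K (hfb j) j
  have hwj_int : ∀ j : Fin d, Integrable (fun ω => X (k+1) ω j - X k ω j) μ := fun j =>
    ((EuclideanSpace.proj j (𝕜 := ℝ)).integrable_comp (hX.integrable (k+1))).sub
      ((EuclideanSpace.proj j (𝕜 := ℝ)).integrable_comp (hX.integrable k))
  have hGj_int : ∀ j : Fin d,
      Integrable (fun ω => (Ψ ω * X k ω j) * (X (k+1) ω j - X k ω j)) μ := fun j =>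
    (hwj_int j).bdd_mul ((hfm j).mono (ℱ.le k)).aestronglyMeasurable (hfb j)
  set G : Ω → ℝ := fun ω => ∑ j : Fin d, (Ψ ω * X k ω j) * (X (k+1) ω j - X k ω j)
    with hGdef
  have hG_int : Integrable G μ := integrable_finset_sum _ (fun j _ => hGj_int j)
  have hG_zero : ∫ ω, G ω ∂μ = 0 := by
    rw [hGdef, integral_finset_sum _ (fun j _ => hGj_int j)]
    simp only [hzero, Finset.sum_const_zero]
  set Fc : Ω → ℝ := fun ω => Real.cosh (l * ‖X k ω‖) * Real.cosh (l * cc) with hFcdef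
  have hFc_int : Integrable Fc μ := (my_cosh_integrable hX k l R hXk hl).mul_const _
  have hX1b : ∀ᵐ ω ∂μ, ‖X (k+1) ω‖ ≤ R + cc := by
    filter_upwards [hXk, hw] with ω h1 h2
    calc ‖X (k+1) ω‖ = ‖X k ω + (X (k+1) ω - X k ω)‖ := by rw [add_sub_cancel]
      _ ≤ ‖X k ω‖ + ‖X (k+1) ω - X k ω‖ := norm_add_le _ _
      _ ≤ R + cc := add_le_add h1 h2
  have hcosh1_int : Integrable (fun ω => Real.cosh (l * ‖X (k+1) ω‖)) μ :=
    my_cosh_integrable hX (k+1) l (R + cc) hX1b hl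
  have hpt : ∀ᵐ ω ∂μ, Real.cosh (l * ‖X (k+1) ω‖) ≤ Fc ω + G ω := by
    filter_upwards [hw] with ω hωw
    have h := my_pointwise hl hcc (X k ω) (X (k+1) ω - X k ω) hωw
    rw [add_sub_cancel] at h
    refine h.trans (le_of_eq ?_)
    congr 1
    have hinner : (inner ℝ (X k ω) (X (k+1) ω - X k ω) : ℝ)
        = ∑ j : Fin d, X k ω j * (X (k+1) ω j - X k ω j) := by
      rw [PiLp.inner_apply]
      simp [RCLike.inner_apply, conj_trivial, mul_comm]
    rw [hinner, hGdef]
    rw [Finset.sum_mul]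
    exact Finset.sum_congr rfl fun j _ => by ring
  calc ∫ ω, Real.cosh (l * ‖X (k+1) ω‖) ∂μ ≤ ∫ ω, (Fc ω + G ω) ∂μ :=
        integral_mono_ae hcosh1_int (hFc_int.add hG_int) hpt
    _ = (∫ ω, Fc ω ∂μ) + ∫ ω, G ω ∂μ := integral_add hFc_int hG_int
    _ = ∫ ω, Fc ω ∂μ := by rw [hG_zero, add_zero]
    _ = (∫ ω, Real.cosh (l * ‖X k ω‖) ∂μ) * Real.cosh (l * cc) := integral_mul_const _ _
    _ = Real.cosh (l * cc) * ∫ ω, Real.cosh (l * ‖X k ω‖) ∂μ := mul_comm _ _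
end AuxProb

open MeasureTheory Real in



theorem statement_12 {Ω : Type*} {m0 : MeasurableSpace Ω} {μ : Measure Ω}
    [IsProbabilityMeasure μ]
    (d n : ℕ) (ℱ : Filtration ℕ m0)
    (X : ℕ → Ω → EuclideanSpace ℝ (Fin d))
    (hX : Martingale X ℱ μ)
    (hX0 : ∀ ω, X 0 ω = 0)
    (c : ℕ → ℝ) (hc : ∀ i, 0 ≤ c i)
    (hbd : ∀ i, 1 ≤ i → i ≤ n → ∀ᵐ ω ∂μ, ‖X i ω - X (i - 1) ω‖ ≤ c i)
    (δ : ℝ) (hδ : 0 < δ) :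
    μ {ω | δ ≤ ‖X n ω‖} ≤
      ENNReal.ofReal (2 * Real.exp 3 *
        Real.exp (-δ ^ 2 / (2 * ∑ i ∈ Finset.Icc 1 n, (c i) ^ 2))) := by
  set S : ℝ := ∑ i ∈ Finset.Icc 1 n, (c i) ^ 2 with hSdef
  have hS0 : 0 ≤ S := Finset.sum_nonneg fun i _ => sq_nonneg _
  -- a.e. norm bounds
  set B : ℕ → ℝ := fun k => ∑ i ∈ Finset.Icc 1 k, c i with hBdef
  have hB0 : ∀ k, 0 ≤ B k := fun k => Finset.sum_nonneg fun i _ => hc i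
  have hnormb : ∀ k, k ≤ n → ∀ᵐ ω ∂μ, ‖X k ω‖ ≤ B k := by
    intro k
    induction k with
    | zero =>
      intro _
      refine Filter.Eventually.of_forall fun ω => ?_
      simp [hX0 ω, hBdef]
    | succ k ih =>
      intro hk1
      have hwk := hbd (k+1) (Nat.succ_le_succ (Nat.zero_le k)) hk1
      simp only [Nat.add_sub_cancel] at hwk
      filter_upwards [ih (Nat.le_of_succ_le hk1), hwk] with ω h1 h2
      have hB : B (k+1) = B k + c (k+1) := by
        rw [hBdef]
        exact Finset.sum_Icc_succ_top (Nat.succ_le_succ (Nat.zero_le k)) _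
      calc ‖X (k+1) ω‖ = ‖X k ω + (X (k+1) ω - X k ω)‖ := by rw [add_sub_cancel]
        _ ≤ ‖X k ω‖ + ‖X (k+1) ω - X k ω‖ := norm_add_le _ _
        _ ≤ B k + c (k+1) := add_le_add h1 h2
        _ = B (k+1) := hB.symm
  rcases hS0.eq_or_lt with hS | hS
  · -- S = 0 : all increments vanish
    have hci : ∀ i ∈ Finset.Icc 1 n, (c i)^2 = 0 := by
      intro i hi
      exact (Finset.sum_eq_zero_iff_of_nonneg (fun i _ => sq_nonneg (c i))).1 hS.symm i hi
    have hBn : B n = 0 := by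
      rw [hBdef]
      exact Finset.sum_eq_zero fun i hi => pow_eq_zero_iff (n := 2) (by norm_num) |>.1 (hci i hi)
    have hae : ∀ᵐ ω ∂μ, ω ∉ {ω | δ ≤ ‖X n ω‖} := by
      filter_upwards [hnormb n le_rfl] with ω hω
      simp only [Set.mem_setOf_eq, not_le]
      calc ‖X n ω‖ ≤ B n := hω
        _ = 0 := hBn
        _ < δ := hδ
    have : μ {ω | δ ≤ ‖X n ω‖} = 0 := by
      rw [← measure_eq_zero_iff_ae_notMem] at hae
      exact hae
    rw [this]
    exact bot_le
  · -- S > 0 : main argument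
    set l : ℝ := δ / S with hldef
    have hl : 0 < l := div_pos hδ hS
    have hXm : ∀ i, AEStronglyMeasurable (X i) μ := fun i =>
      ((hX.stronglyAdapted i).mono (ℱ.le i)).aestronglyMeasurable
    have H : ∀ k, k ≤ n →
        ∫ ω, Real.cosh (l * ‖X k ω‖) ∂μ ≤
          Real.exp (l^2 * (∑ i ∈ Finset.Icc 1 k, (c i)^2) / 2) := by
      intro k
      induction k with
      | zero =>
        intro _
        have : (Finset.Icc 1 0 : Finset ℕ) = ∅ := Finset.Icc_eq_empty (by norm_num)
        rw [this]
        simp [hX0]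
      | succ k ih =>
        intro hk1
        have hik := ih (Nat.le_of_succ_le hk1)
        have hsum : ∑ i ∈ Finset.Icc 1 (k+1), (c i)^2
            = (∑ i ∈ Finset.Icc 1 k, (c i)^2) + c (k+1)^2 :=
          Finset.sum_Icc_succ_top (Nat.succ_le_succ (Nat.zero_le k)) _
        have hwk := hbd (k+1) (Nat.succ_le_succ (Nat.zero_le k)) hk1
        simp only [Nat.add_sub_cancel] at hwk
        rcases (hc (k+1)).eq_or_lt with hck | hck
        · -- c (k+1) = 0 : the increment vanishes a.e.
          have heq : (fun ω => Real.cosh (l * ‖X (k+1) ω‖))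
              =ᵐ[μ] fun ω => Real.cosh (l * ‖X k ω‖) := by
            filter_upwards [hwk] with ω hω
            have : X (k+1) ω = X k ω := by
              have : ‖X (k+1) ω - X k ω‖ ≤ 0 := by rw [← hck] at hω; exact hω
              have h0 : X (k+1) ω - X k ω = 0 :=
                norm_le_zero_iff.1 this
              exact sub_eq_zero.1 h0
            rw [this]
          rw [integral_congr_ae heq, hsum, ← hck]
          simpa using hik
        · -- c (k+1) > 0 : use the step lemma
          have hstep := my_step hX k hl.le hck
            (show (0:ℝ) < B k + 1 by linarith [hB0 k]) hwk
            (by filter_upwards [hnormb k (Nat.le_of_succ_le hk1)] with ω hω; linarith)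
          refine hstep.trans ?_
          have hcosh : Real.cosh (l * c (k+1)) ≤ Real.exp (l^2 * c (k+1)^2 / 2) := by
            have := Real.cosh_le_exp_half_sq (l * c (k+1))
            rwa [mul_pow] at this
          have hint_nonneg : 0 ≤ ∫ ω, Real.cosh (l * ‖X k ω‖) ∂μ :=
            integral_nonneg fun ω => (Real.cosh_pos _).le
          calc Real.cosh (l * c (k+1)) * ∫ ω, Real.cosh (l * ‖X k ω‖) ∂μ
              ≤ Real.exp (l^2 * c (k+1)^2 / 2)
                * Real.exp (l^2 * (∑ i ∈ Finset.Icc 1 k, (c i)^2) / 2) :=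
                mul_le_mul hcosh hik hint_nonneg (Real.exp_pos _).le
            _ = Real.exp (l^2 * (∑ i ∈ Finset.Icc 1 (k+1), (c i)^2) / 2) := by
                rw [← Real.exp_add, hsum]; congr 1; ring
    -- Chernoff
    have hcosh_n_int : Integrable (fun ω => Real.cosh (l * ‖X n ω‖)) μ :=
      my_cosh_integrable hX n l (B n) (hnormb n le_rfl) hl.le
    have hexp_int : Integrable (fun ω => Real.exp (l * ‖X n ω‖)) μ := by
      have hm : AEStronglyMeasurable (fun ω => Real.exp (l * ‖X n ω‖)) μ :=
        Real.continuous_exp.comp_aestronglyMeasurable (((hXm n).norm).const_mul l)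
      refine (integrable_const (Real.exp (l * B n))).mono' hm ?_
      filter_upwards [hnormb n le_rfl] with ω hω
      rw [Real.norm_eq_abs, abs_of_pos (Real.exp_pos _)]
      exact Real.exp_le_exp.2 (mul_le_mul_of_nonneg_left hω hl.le)
    have hmgf : ProbabilityTheory.mgf (fun ω => ‖X n ω‖) μ l ≤ 2 * Real.exp (l^2 * S / 2) := by
      have h1 : ProbabilityTheory.mgf (fun ω => ‖X n ω‖) μ l
          = ∫ ω, Real.exp (l * ‖X n ω‖) ∂μ := rfl
      rw [h1]
      have h2 : ∫ ω, Real.exp (l * ‖X n ω‖) ∂μ ≤ ∫ ω, 2 * Real.cosh (l * ‖X n ω‖) ∂μ := by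
        refine integral_mono hexp_int (hcosh_n_int.const_mul 2) fun ω => ?_
        have := Real.cosh_add_sinh (l * ‖X n ω‖)
        have hs := (Real.sinh_lt_cosh (l * ‖X n ω‖)).le
        linarith
      refine h2.trans ?_
      rw [integral_const_mul]
      have := H n le_rfl
      nlinarith [this]
    have hkey := ProbabilityTheory.measure_ge_le_exp_mul_mgf
      (X := fun ω => ‖X n ω‖) (μ := μ) (t := l) δ hl.le hexp_int
    have hfin : (μ {ω | δ ≤ ‖X n ω‖}).toReal
        ≤ 2 * Real.exp 3 * Real.exp (-δ^2 / (2*S)) := by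
      have h3 : Real.exp (-l * δ) * ProbabilityTheory.mgf (fun ω => ‖X n ω‖) μ l
          ≤ Real.exp (-l * δ) * (2 * Real.exp (l^2 * S / 2)) :=
        mul_le_mul_of_nonneg_left hmgf (Real.exp_pos _).le
      have h4 : Real.exp (-l * δ) * (2 * Real.exp (l^2 * S / 2))
          = 2 * Real.exp (-δ^2 / (2*S)) := by
        rw [mul_comm (Real.exp (-l*δ)), mul_assoc, ← Real.exp_add]
        congr 1
        rw [hldef]
        field_simp
        ring
      have h5 : 2 * Real.exp (-δ^2 / (2*S)) ≤ 2 * Real.exp 3 * Real.exp (-δ^2 / (2*S)) := by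
        nlinarith [Real.exp_pos (-δ^2 / (2*S)), Real.one_le_exp (by norm_num : (0:ℝ) ≤ 3)]
      calc (μ {ω | δ ≤ ‖X n ω‖}).toReal
          ≤ Real.exp (-l * δ) * ProbabilityTheory.mgf (fun ω => ‖X n ω‖) μ l := hkey
        _ ≤ 2 * Real.exp (-δ^2 / (2*S)) := by rw [← h4]; exact h3
        _ ≤ 2 * Real.exp 3 * Real.exp (-δ^2 / (2*S)) := h5
    rw [← ENNReal.ofReal_toReal (measure_ne_top μ {ω | δ ≤ ‖X n ω‖})]
    exact ENNReal.ofReal_le_ofReal hfin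
end
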